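/- arXiv:2510.05422 — 3 statements merged into one kernel-verified Lean document; each statement's English description precedes it below -/
import Mathlib

section
/- Let s ≥ 1 and r be integers with s+2 ≤ r ≤ 2s. Then for every integer n ≥ 2s+2, the Turán number of Berge matchings satisfies ex_r(n, BM_{s+1}) = C(2s+1, r). -/
open Finset

/-- `H` is an `r`-uniform hypergraph (an `r`-graph): every hyperedge has exactly `r` vertices. -/
def IsUniform {V : Type*} (r : ℕ) (H : Finset (Finset V)) : Prop :=
  ∀ e ∈ H, e.card = r

/-- `H` contains a Berge copy of the graph with edge set `F`: there are an injection `g`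
of the vertices of `F` into the vertices of `H` and an injection `φ` of the edges of `F`
into the hyperedges of `H` such that `g '' e ⊆ φ e` for every edge `e` of `F`. -/
def ContainsBerge {α V : Type*} [DecidableEq α] [DecidableEq V]
    (F : Finset (Finset α)) (H : Finset (Finset V)) : Prop :=
  ∃ (g : α → V) (φ : Finset α → Finset V),
    Function.Injective g ∧ Set.InjOn φ ↑F ∧
      (∀ e ∈ F, φ e ∈ H) ∧ ∀ e ∈ F, e.image g ⊆ φ e

/-- `H` contains a copy (a subhypergraph isomorphic to) of the hypergraph with
vertex set `A` and edge set `F`. -/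
def ContainsCopy {α V : Type*} [DecidableEq α] [DecidableEq V]
    (A : Finset α) (F : Finset (Finset α)) (H : Finset (Finset V)) : Prop :=
  ∃ g : α → V, Set.InjOn g ↑A ∧ ∀ e ∈ F, e.image g ∈ H

/-- The edge set of the matching `M_t` consisting of `t` pairwise disjoint edges. -/
def matchingHG (t : ℕ) : Finset (Finset (Fin t × Fin 2)) :=
  Finset.univ.image fun i : Fin t => ({(i, 0), (i, 1)} : Finset (Fin t × Fin 2))

/-- The Turán number: the maximum number of hyperedges in an `r`-graph on `n` vertices
satisfying the freeness predicate `Free`. -/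
noncomputable def exr (n r : ℕ) (Free : Finset (Finset (Fin n)) → Prop) : ℕ :=
  sSup {m | ∃ H : Finset (Finset (Fin n)), IsUniform r H ∧ Free H ∧ H.card = m}

section Aux

variable {V : Type*} [DecidableEq V]

def Chain2 (U : Finset V) : List (Finset V) → Prop
  | [] => True
  | a :: l => ¬ a ⊆ U ∧ Chain2 (U ∪ a) l

lemma chain2_append (f : Finset V) :
    ∀ (L : List (Finset V)) (U : Finset V), Chain2 U L →
      ¬ f ⊆ U ∪ L.foldr (· ∪ ·) ∅ → Chain2 U (L ++ [f])
  | [], U, _, hf => by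
    refine ⟨fun hsub => hf ?_, trivial⟩
    simpa using hsub.trans (by simp)
  | a :: l, U, h, hf => by
    refine ⟨h.1, chain2_append f l (U ∪ a) h.2 ?_⟩
    intro hsub
    refine hf (hsub.trans ?_)
    intro x hx
    simp only [List.foldr_cons, Finset.mem_union] at hx ⊢
    tauto

lemma chain2_take : ∀ (L : List (Finset V)) (m : ℕ) (U : Finset V),
    Chain2 U L → Chain2 U (L.take m)
  | [], m, U, h => by simpa using h
  | a :: l, 0, U, _ => trivial
  | a :: l, m + 1, U, h => ⟨h.1, chain2_take l m (U ∪ a) h.2⟩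

lemma chain2_not_subset : ∀ (L : List (Finset V)) (U : Finset V),
    Chain2 U L → ∀ e ∈ L, ¬ e ⊆ U
  | [], _, _, e, he => by simp at he
  | a :: l, U, h, e, he => by
    rcases List.mem_cons.1 he with rfl | he'
    · exact h.1
    · exact fun hsub => chain2_not_subset l (U ∪ a) h.2 e he'
        (hsub.trans Finset.subset_union_left)

lemma chain2_nodup : ∀ (L : List (Finset V)) (U : Finset V), Chain2 U L → L.Nodup
  | [], _, _ => List.nodup_nil
  | a :: l, U, h => by
    refine List.nodup_cons.2 ⟨fun hmem => ?_, chain2_nodup l (U ∪ a) h.2⟩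
    exact chain2_not_subset l (U ∪ a) h.2 a hmem
      (Finset.subset_union_right)

lemma chain2_map_insert (v : V) : ∀ (L : List (Finset V)) (U : Finset V),
    Chain2 U L → (∀ a ∈ L, v ∉ a) → Chain2 (insert v U) (L.map (insert v ·))
  | [], _, _, _ => trivial
  | a :: l, U, h, hv => by
    obtain ⟨x, hxa, hxU⟩ := Finset.not_subset.1 h.1
    refine ⟨Finset.not_subset.2 ⟨x, Finset.mem_insert_of_mem hxa, fun hx => ?_⟩, ?_⟩
    · rcases Finset.mem_insert.1 hx with rfl | hx
      · exact hv a (List.mem_cons_self) hxa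
      · exact hxU hx
    · have := chain2_map_insert v l (U ∪ a) h.2 (fun b hb => hv b (List.mem_cons_of_mem _ hb))
      have heq : insert v (U ∪ a) = insert v U ∪ insert v a := by
        ext y
        simp only [Finset.mem_insert, Finset.mem_union]
        tauto
      rw [heq] at this
      exact this

lemma chain2_mono : ∀ (L : List (Finset V)) {U U' : Finset V}, U' ⊆ U →
    Chain2 U L → Chain2 U' L
  | [], _, _, _, _ => trivial
  | a :: l, U, U', hUU, h =>
    ⟨fun hsub => h.1 (hsub.trans hUU),
      chain2_mono l (Finset.union_subset_union_left hUU) h.2⟩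

lemma mem_foldr_union {L : List (Finset V)} {x : V} :
    x ∈ L.foldr (· ∪ ·) ∅ ↔ ∃ e ∈ L, x ∈ e := by
  induction L with
  | nil => simp
  | cons a l ih => simp [ih]

lemma chain2_singletons : ∀ (L : List (Finset V)) (U : Finset V),
    (∀ e ∈ L, e.card = 1) → L.Nodup → (∀ e ∈ L, ¬ e ⊆ U) → Chain2 U L
  | [], _, _, _, _ => trivial
  | a :: l, U, hcard, hnd, hU => by
    refine ⟨hU a (List.mem_cons_self), ?_⟩
    refine chain2_singletons l (U ∪ a) (fun e he => hcard e (List.mem_cons_of_mem _ he))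
      (List.nodup_cons.1 hnd).2 ?_
    intro e he hsub
    obtain ⟨y, rfl⟩ := Finset.card_eq_one.1 (hcard e (List.mem_cons_of_mem _ he))
    have hy := hsub (Finset.mem_singleton_self y)
    rcases Finset.mem_union.1 hy with hyU | hya
    · exact hU _ (List.mem_cons_of_mem _ he) (Finset.singleton_subset_iff.2 hyU)
    · obtain ⟨z, rfl⟩ := Finset.card_eq_one.1 (hcard a (List.mem_cons_self))
      have : y = z := Finset.mem_singleton.1 hya
      subst this
      exact (List.nodup_cons.1 hnd).1 he

lemma chain2_get : ∀ (L : List (Finset V)) (U : Finset V), Chain2 U L →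
    ∀ (i : ℕ) (hi : i < L.length), ∃ x ∈ L.get ⟨i, hi⟩, x ∉ U ∧
      ∀ (j : ℕ) (hj : j < L.length), j < i → x ∉ L.get ⟨j, hj⟩
  | [], _, _, i, hi => absurd hi (by simp)
  | a :: l, U, h, 0, hi => by
    obtain ⟨x, hxa, hxU⟩ := Finset.not_subset.1 h.1
    exact ⟨x, hxa, hxU, fun j hj hj0 => absurd hj0 (by omega)⟩
  | a :: l, U, h, i + 1, hi => by
    obtain ⟨x, hx, hxU, hprev⟩ := chain2_get l (U ∪ a) h.2 i (by simpa using hi)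
    refine ⟨x, hx, fun hxU' => hxU (Finset.mem_union_left _ hxU'), ?_⟩
    intro j hj hji
    cases j with
    | zero => exact fun hxa => hxU (Finset.mem_union_right _ hxa)
    | succ j' => exact hprev j' (by simpa using hj) (by omega)

lemma chain_bound_aux : ∀ (N r t : ℕ) (H : Finset (Finset V)),
    r + t ≤ N →
    (∀ e ∈ H, e.card = r + 1) →
    (∀ L : List (Finset V), (∀ e ∈ L, e ∈ H) → Chain2 ∅ L → L.length ≤ t) →
    H.card ≤ (r + t).choose (r + 1) := by
  intro N
  induction N with
  | zero =>
    intro r t H hN hu hno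
    have hr : r = 0 := by omega
    have ht : t = 0 := by omega
    subst hr; subst ht
    -- H must be empty
    rcases H.eq_empty_or_nonempty with rfl | ⟨e, he⟩
    · simp
    · exfalso
      have h1 : Chain2 (∅ : Finset V) [e] := by
        refine ⟨?_, trivial⟩
        intro hsub
        have : e.card = 0 := Finset.card_eq_zero.2 (Finset.subset_empty.1 hsub)
        rw [hu e he] at this; omega
      have := hno [e] (by simpa using he) h1
      simp at this
  | succ N' ih =>
    intro r t H hN hu hno
    match t, r with
    | 0, r =>
      rcases H.eq_empty_or_nonempty with rfl | ⟨e, he⟩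
      · simp
      · exfalso
        have h1 : Chain2 (∅ : Finset V) [e] := by
          refine ⟨?_, trivial⟩
          intro hsub
          have : e.card = 0 := Finset.card_eq_zero.2 (Finset.subset_empty.1 hsub)
          rw [hu e he] at this; omega
        have := hno [e] (by simpa using he) h1
        simp at this
    | t' + 1, 0 =>
      -- singletons: H.card ≤ t'+1
      by_contra hcon
      push_neg at hcon
      rw [Nat.zero_add, Nat.choose_one_right] at hcon
      obtain ⟨T, hTH, hTcard⟩ := Finset.exists_subset_card_eq (show t' + 2 ≤ H.card by omega)
      have hchain : Chain2 (∅ : Finset V) T.toList := by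
        refine chain2_singletons _ _ (fun e he => hu e (hTH (Finset.mem_toList.1 he)))
          T.nodup_toList ?_
        intro e he hsub
        have : e.card = 0 := Finset.card_eq_zero.2 (Finset.subset_empty.1 hsub)
        rw [hu e (hTH (Finset.mem_toList.1 he))] at this; omega
      have hlen := hno T.toList (fun e he => hTH (Finset.mem_toList.1 he)) hchain
      rw [Finset.length_toList, hTcard] at hlen
      omega
    | t' + 1, r' + 1 =>
      rcases H.eq_empty_or_nonempty with rfl | ⟨e₀, he₀⟩
      · simp
      · have hcard0 : e₀.card = r' + 2 := hu e₀ he₀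
        have : e₀.Nonempty := Finset.card_pos.1 (by omega)
        obtain ⟨v, hv⟩ := this
        set H₁ := H.filter (fun e => v ∈ e) with hH₁
        set H₂ := H.filter (fun e => v ∉ e) with hH₂
        have hsplit : H₁.card + H₂.card = H.card := by
          rw [hH₁, hH₂]
          exact Finset.card_filter_add_card_filter_not _
        -- bound H₂
        have hb2 : H₂.card ≤ (r' + 1 + t').choose (r' + 2) := by
          refine ih (r' + 1) t' H₂ (by omega) (fun e he => hu e (Finset.mem_filter.1 he).1) ?_
          intro L hmem hch
          have hnotin : ∀ a ∈ L, v ∉ a := fun a ha => (Finset.mem_filter.1 (hmem a ha)).2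
          have happ : Chain2 (∅ : Finset V) (L ++ [e₀]) := by
            refine chain2_append e₀ L ∅ hch ?_
            intro hsub
            have hv2 := hsub hv
            rcases Finset.mem_union.1 hv2 with h | h
            · simp at h
            · obtain ⟨a, ha, hva⟩ := mem_foldr_union.1 h
              exact hnotin a ha hva
          have := hno (L ++ [e₀]) ?_ happ
          · rw [List.length_append] at this; simp at this; omega
          · intro e he
            rcases List.mem_append.1 he with h | h
            · exact (Finset.mem_filter.1 (hmem e h)).1
            · simp at h; subst h; exact he₀
        -- bound H₁ via links
        have hmemv : ∀ e ∈ H₁, v ∈ e := fun e he => (Finset.mem_filter.1 he).2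
        set H₁' := H₁.image (fun e => e.erase v) with hH₁'
        have hinj : Set.InjOn (fun e => Finset.erase e v) ↑H₁ := by
          intro a ha b hb hab
          simp only at hab
          have : insert v (a.erase v) = insert v (b.erase v) := by rw [hab]
          rwa [Finset.insert_erase (hmemv a ha), Finset.insert_erase (hmemv b hb)] at this
        have hcard1 : H₁'.card = H₁.card := Finset.card_image_of_injOn hinj
        have hb1 : H₁.card ≤ (r' + (t' + 1)).choose (r' + 1) := by
          rw [← hcard1]
          refine ih r' (t' + 1) H₁' (by omega) ?_ ?_
          · intro e he
            obtain ⟨a, ha, rfl⟩ := Finset.mem_image.1 he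
            rw [Finset.card_erase_of_mem (hmemv a ha), hu a (Finset.mem_filter.1 ha).1]
            omega
          · intro L' hmem' hch'
            have hnotv : ∀ a ∈ L', v ∉ a := by
              intro a ha
              obtain ⟨b, hb, rfl⟩ := Finset.mem_image.1 (hmem' a ha)
              exact Finset.notMem_erase v b
            have hlift := chain2_map_insert v L' ∅ hch' hnotv
            have hlift' : Chain2 (∅ : Finset V) (L'.map (insert v ·)) :=
              chain2_mono _ (Finset.empty_subset _) hlift
            have hmm : ∀ e ∈ L'.map (insert v ·), e ∈ H := by
              intro e he
              obtain ⟨a, ha, rfl⟩ := List.mem_map.1 he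
              obtain ⟨b, hb, rfl⟩ := Finset.mem_image.1 (hmem' a ha)
              rw [Finset.insert_erase (hmemv b hb)]
              exact (Finset.mem_filter.1 hb).1
            have := hno _ hmm hlift'
            rwa [List.length_map] at this
        calc H.card = H₁.card + H₂.card := hsplit.symm
          _ ≤ (r' + (t' + 1)).choose (r' + 1) + (r' + 1 + t').choose (r' + 2) := by
              exact Nat.add_le_add hb1 hb2
          _ = (r' + 1 + (t' + 1)).choose (r' + 2) := by
              have := Nat.choose_succ_succ (r' + t' + 1) (r' + 1)
              have h1 : r' + (t' + 1) = r' + t' + 1 := by omega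
              have h2 : r' + 1 + t' = r' + t' + 1 := by omega
              have h3 : r' + 1 + (t' + 1) = (r' + t' + 1) + 1 := by omega
              rw [h1, h2, h3, this]

lemma exists_chain (H : Finset (Finset V)) (r' t : ℕ)
    (hu : ∀ e ∈ H, e.card = r' + 1)
    (hcard : (r' + t).choose (r' + 1) < H.card) :
    ∃ L : List (Finset V), (∀ e ∈ L, e ∈ H) ∧ Chain2 ∅ L ∧ L.length = t + 1 := by
  by_contra hcon
  push_neg at hcon
  have hno : ∀ L : List (Finset V), (∀ e ∈ L, e ∈ H) → Chain2 ∅ L → L.length ≤ t := by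
    intro L hmem hch
    by_contra hlen
    push_neg at hlen
    refine hcon (L.take (t + 1)) (fun e he => hmem e (List.mem_of_mem_take he)) ?_ ?_
    · exact chain2_take L (t + 1) ∅ hch
    · rw [List.length_take]; omega
  exact absurd (chain_bound_aux (r' + t) r' t H le_rfl hu hno) (by omega)

lemma berge_of_large_card (s r : ℕ) (hs : 1 ≤ s) (hr1 : s + 2 ≤ r) (hr2 : r ≤ 2 * s)
    (H : Finset (Finset V)) (hu : IsUniform r H)
    (hcard : (2 * s + 1).choose r < H.card) :
    ContainsBerge (matchingHG (s + 1)) H := by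
  have hs2 : 2 ≤ s := by omega
  have hu' : ∀ e ∈ H, e.card = (r - 1) + 1 := by
    intro e he; rw [hu e he]; omega
  have hch : ∃ L : List (Finset V), (∀ e ∈ L, e ∈ H) ∧ Chain2 ∅ L ∧
      L.length = (2 * s + 2 - r) + 1 := by
    refine exists_chain H (r - 1) (2 * s + 2 - r) hu' ?_
    have h1 : (r - 1) + (2 * s + 2 - r) = 2 * s + 1 := by omega
    have h2 : (r - 1) + 1 = r := by omega
    rw [h1, h2]; exact hcard
  obtain ⟨L, hLmem, hLch, hLlen⟩ := hch
  have hLnodup : L.Nodup := chain2_nodup L ∅ hLch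
  have hLfin : L.toFinset ⊆ H := by
    intro e he; exact hLmem e (List.mem_toFinset.1 he)
  have hchoose_ge : r + 1 ≤ (2 * s + 1).choose r := by
    calc r + 1 = (r + 1).choose r := (Nat.choose_succ_self_right r).symm
      _ ≤ (2 * s + 1).choose r := Nat.choose_le_choose r (by omega)
  have hsd : r - s - 2 ≤ (H \ L.toFinset).card := by
    rw [Finset.card_sdiff_of_subset hLfin, List.toFinset_card_of_nodup hLnodup, hLlen]
    omega
  obtain ⟨T, hTsub, hTcard⟩ := Finset.exists_subset_card_eq hsd
  set D : List (Finset V) := L ++ T.toList with hD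
  have hDlen : D.length = s + 1 := by
    rw [hD, List.length_append, hLlen, Finset.length_toList, hTcard]
    omega
  have hDmem : ∀ e ∈ D, e ∈ H := by
    intro e he
    rcases List.mem_append.1 he with h | h
    · exact hLmem e h
    · exact (Finset.mem_sdiff.1 (hTsub (Finset.mem_toList.1 h))).1
  have hDnodup : D.Nodup := by
    refine List.Nodup.append hLnodup T.nodup_toList ?_
    intro a haL haT
    exact (Finset.mem_sdiff.1 (hTsub (Finset.mem_toList.1 haT))).2 (List.mem_toFinset.2 haL)
  set d : Fin (s + 1) → Finset V := fun i => D.get (Fin.cast hDlen.symm i) with hd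
  have hdinj : Function.Injective d := by
    intro a b hab
    have h1 := List.nodup_iff_injective_get.1 hDnodup hab
    have := congrArg Fin.val h1
    simpa [Fin.val_eq_val] using this
  have hdmem : ∀ i, d i ∈ H := by
    intro i
    refine hDmem _ ?_
    exact List.get_mem D _
  have hdcard : ∀ i, (d i).card = r := fun i => hu _ (hdmem i)
  -- chain new-vertex property
  have hchainprop : ∀ i : Fin (s + 1), (i : ℕ) < 2 * s + 3 - r →
      ∃ x ∈ d i, ∀ j : Fin (s + 1), j < i → x ∉ d j := by
    intro i hi
    have hiL : (i : ℕ) < L.length := by rw [hLlen]; omega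
    obtain ⟨x, hx, -, hprev⟩ := chain2_get L ∅ hLch i hiL
    have hgeti : d i = L.get ⟨i, hiL⟩ := by
      show D.get _ = _
      rw [List.get_eq_getElem, List.get_eq_getElem]
      exact List.getElem_append_left hiL
    refine ⟨x, by rwa [hgeti], ?_⟩
    intro j hj
    have hjL : (j : ℕ) < L.length := by
      have : (j : ℕ) < (i : ℕ) := hj
      omega
    have hgetj : d j = L.get ⟨j, hjL⟩ := by
      show D.get _ = _
      rw [List.get_eq_getElem, List.get_eq_getElem]
      exact List.getElem_append_left hjL
    rw [hgetj]
    exact hprev j hjL hj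
  -- Hall condition on index families
  have hallI : ∀ I : Finset (Fin (s + 1)), 2 * I.card ≤ (I.biUnion d).card := by
    intro I
    set A := I.filter (fun i : Fin (s+1) => (i : ℕ) < 2 * s + 3 - r) with hA
    set B := I.filter (fun i : Fin (s+1) => ¬ (i : ℕ) < 2 * s + 3 - r) with hB
    have hAB : A.card + B.card = I.card := Finset.card_filter_add_card_filter_not _
    have hBcard : B.card ≤ r - s - 2 := by
      have hsub : B.image Fin.val ⊆ (Finset.range (s + 1)).filter (fun m => 2 * s + 3 - r ≤ m) := by
        intro m hm
        obtain ⟨j, hj, rfl⟩ := Finset.mem_image.1 hm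
        have := Finset.mem_filter.1 hj
        simp only [Finset.mem_filter, Finset.mem_range]
        exact ⟨j.2, by omega⟩
      have hcardim : (B.image Fin.val).card = B.card :=
        Finset.card_image_of_injective _ Fin.val_injective
    -- compute the filter's card
      have heq : (Finset.range (s + 1)).filter (fun m => 2 * s + 3 - r ≤ m) =
          Finset.range (s + 1) \ Finset.range (2 * s + 3 - r) := by
        ext m
        simp only [Finset.mem_filter, Finset.mem_range, Finset.mem_sdiff]
        omega
      have hc2 : ((Finset.range (s + 1)).filter (fun m => 2 * s + 3 - r ≤ m)).card = r - s - 2 := by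
        rw [heq, Finset.card_sdiff_of_subset (by intro m hm; simp at hm ⊢; omega)]
        simp only [Finset.card_range]
        omega
      calc B.card = (B.image Fin.val).card := hcardim.symm
        _ ≤ _ := Finset.card_le_card hsub
        _ = r - s - 2 := hc2
    have hAcard : A.card ≤ 2 * s + 3 - r := by
      have hsub : A.image Fin.val ⊆ Finset.range (2 * s + 3 - r) := by
        intro m hm
        obtain ⟨j, hj, rfl⟩ := Finset.mem_image.1 hm
        have := (Finset.mem_filter.1 hj).2
        simpa using this
      calc A.card = (A.image Fin.val).card :=
            (Finset.card_image_of_injective _ Fin.val_injective).symm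
        _ ≤ (Finset.range (2 * s + 3 - r)).card := Finset.card_le_card hsub
        _ = 2 * s + 3 - r := Finset.card_range _
    rcases A.eq_empty_or_nonempty with hAe | hAne
    · -- no chain part
      rcases I.eq_empty_or_nonempty with rfl | ⟨i, hi⟩
      · simp
      · have hIB : I.card = B.card := by rw [← hAB, hAe]; simp
        have hdsub : d i ⊆ I.biUnion d := by
          intro x hx; exact Finset.mem_biUnion.2 ⟨i, hi, hx⟩
        have : r ≤ (I.biUnion d).card := by
          rw [← hdcard i]; exact Finset.card_le_card hdsub
        omega
    · -- chain part nonempty : key claim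
      have hkey : ∀ A' : Finset (Fin (s + 1)), (∀ i ∈ A', (i : ℕ) < 2 * s + 3 - r) →
          A'.Nonempty → r + A'.card ≤ (A'.biUnion d).card + 1 := by
        intro A'
        induction A' using Finset.induction_on_max with
        | empty => intro _ h; exact absurd rfl h.ne_empty
        | insert a A'' hlt ih =>
          intro hbound hne
          rcases A''.eq_empty_or_nonempty with rfl | hA''ne
          · simp only [Finset.biUnion_insert, Finset.biUnion_empty, Finset.union_empty,
              Finset.card_empty, Finset.card_insert_of_notMem (Finset.notMem_empty a),
              hdcard a]
            omega
          · have hbound'' : ∀ i ∈ A'', (i : ℕ) < 2 * s + 3 - r := by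
              intro i hi; exact hbound i (Finset.mem_insert_of_mem hi)
            have hihyp := ih hbound'' hA''ne
            obtain ⟨x, hxa, hxprev⟩ := hchainprop a (hbound a (Finset.mem_insert_self _ _))
            have hxnot : x ∉ A''.biUnion d := by
              intro hx
              obtain ⟨j, hj, hxj⟩ := Finset.mem_biUnion.1 hx
              exact hxprev j (hlt j hj) hxj
            have hanotmem : a ∉ A'' := fun h => lt_irrefl a (hlt a h)
            rw [Finset.card_insert_of_notMem hanotmem, Finset.biUnion_insert]
            have hsubins : insert x (A''.biUnion d) ⊆ d a ∪ A''.biUnion d := by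
              intro y hy
              rcases Finset.mem_insert.1 hy with rfl | hy
              · exact Finset.mem_union_left _ hxa
              · exact Finset.mem_union_right _ hy
            have hstep : (A''.biUnion d).card + 1 ≤ (d a ∪ A''.biUnion d).card := by
              rw [← Finset.card_insert_of_notMem hxnot]
              exact Finset.card_le_card hsubins
            omega
      have hAI : A ⊆ I := Finset.filter_subset _ _
      have hfinal := hkey A (fun i hi => (Finset.mem_filter.1 hi).2) hAne
      have hmono : (A.biUnion d).card ≤ (I.biUnion d).card :=
        Finset.card_le_card (Finset.biUnion_subset_biUnion_of_subset_left _ hAI)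
      omega
  -- Hall's theorem
  have hallcond : ∀ S : Finset (Fin (s + 1) × Fin 2),
      S.card ≤ (S.biUnion (fun p => d p.1)).card := by
    intro S
    have h1 : S.biUnion (fun p => d p.1) = (S.image Prod.fst).biUnion d := by
      rw [Finset.image_biUnion]
    have h2 : S.card ≤ 2 * (S.image Prod.fst).card := by
      have hsub : S ⊆ (S.image Prod.fst) ×ˢ (Finset.univ : Finset (Fin 2)) := by
        intro p hp
        exact Finset.mem_product.2 ⟨Finset.mem_image_of_mem _ hp, Finset.mem_univ _⟩
      calc S.card ≤ ((S.image Prod.fst) ×ˢ (Finset.univ : Finset (Fin 2))).card :=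
            Finset.card_le_card hsub
        _ = 2 * (S.image Prod.fst).card := by
            rw [Finset.card_product]
            simp [Fintype.card_fin, Nat.mul_comm]
    rw [h1]
    exact h2.trans (hallI _)
  obtain ⟨f, hfinj, hfmem⟩ :=
    (Finset.all_card_le_biUnion_card_iff_exists_injective (fun p : Fin (s + 1) × Fin 2 => d p.1)).1
      hallcond
  -- build the Berge matching
  have himg : ∀ i : Fin (s + 1),
      (({((i : Fin (s+1)), (0 : Fin 2)), (i, 1)} : Finset (Fin (s+1) × Fin 2)).image Prod.fst) = {i} := by
    intro i
    rw [Finset.image_insert, Finset.image_singleton]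
    simp
  refine ⟨f, fun A => if h : (A.image Prod.fst).Nonempty then d ((A.image Prod.fst).min' h) else ∅,
    hfinj, ?_, ?_, ?_⟩
  · -- InjOn φ
    intro A hA B hB hAB
    simp only [matchingHG, Finset.coe_image, Set.mem_image] at hA hB
    obtain ⟨i, -, hAeq⟩ := hA
    obtain ⟨j, -, hBeq⟩ := hB
    subst hAeq; subst hBeq
    dsimp only at hAB
    rw [dif_pos (by rw [himg i]; exact ⟨i, Finset.mem_singleton_self i⟩),
        dif_pos (by rw [himg j]; exact ⟨j, Finset.mem_singleton_self j⟩)] at hAB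
    have hAB' : d i = d j := by
      have h1 : ∀ (k : Fin (s+1)) (h : (({((k : Fin (s+1)), (0 : Fin 2)), (k, 1)} :
          Finset (Fin (s+1) × Fin 2)).image Prod.fst).Nonempty),
          (({((k : Fin (s+1)), (0 : Fin 2)), (k, 1)} :
          Finset (Fin (s+1) × Fin 2)).image Prod.fst).min' h = k := by
        intro k h
        have hm := Finset.min'_mem _ h
        obtain ⟨p, hp, hpe⟩ := Finset.mem_image.1 hm
        have hpk : p.1 = k := by
          rcases Finset.mem_insert.1 hp with heq | heq
          · rw [heq]
          · rw [Finset.mem_singleton.1 heq]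
        rw [← hpe, hpk]
      rw [h1 i, h1 j] at hAB
      exact hAB
    rw [hdinj hAB']
  · -- φ e ∈ H
    intro e he
    obtain ⟨i, -, rfl⟩ := Finset.mem_image.1 he
    dsimp only
    rw [dif_pos (by rw [himg i]; exact ⟨i, Finset.mem_singleton_self i⟩)]
    exact hdmem _
  · -- image g e ⊆ φ e
    intro e he
    obtain ⟨i, -, rfl⟩ := Finset.mem_image.1 he
    have hne : ((({((i : Fin (s+1)), (0 : Fin 2)), (i, 1)} :
        Finset (Fin (s+1) × Fin 2)).image Prod.fst)).Nonempty := by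
      rw [himg i]; exact ⟨i, Finset.mem_singleton_self i⟩
    dsimp only
    rw [dif_pos hne]
    have hmin : (({((i : Fin (s+1)), (0 : Fin 2)), (i, 1)} :
        Finset (Fin (s+1) × Fin 2)).image Prod.fst).min' hne = i := by
      have hm := Finset.min'_mem _ hne
      obtain ⟨p, hp, hpe⟩ := Finset.mem_image.1 hm
      have hpk : p.1 = i := by
        rcases Finset.mem_insert.1 hp with heq | heq
        · rw [heq]
        · rw [Finset.mem_singleton.1 heq]
      rw [← hpe, hpk]
    rw [hmin]
    intro x hx
    obtain ⟨p, hp, rfl⟩ := Finset.mem_image.1 hx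
    have hp1 : p.1 = i := by
      rcases Finset.mem_insert.1 hp with heq | heq
      · rw [heq]
      · rw [Finset.mem_singleton.1 heq]
    rw [← hp1]
    exact hfmem p

lemma exists_extremal (s r n : ℕ) (hn : 2 * s + 1 ≤ n) :
    ∃ H : Finset (Finset (Fin n)), IsUniform r H ∧
      ¬ ContainsBerge (matchingHG (s + 1)) H ∧ H.card = (2 * s + 1).choose r := by
  set S : Finset (Fin n) := Finset.map (Fin.castLEEmb hn) Finset.univ with hS
  have hScard : S.card = 2 * s + 1 := by
    rw [hS, Finset.card_map, Finset.card_univ, Fintype.card_fin]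
  refine ⟨S.powersetCard r, ?_, ?_, ?_⟩
  · intro e he
    exact (Finset.mem_powersetCard.1 he).2
  · rintro ⟨g, φ, hg, hφinj, hφH, hsub⟩
    have hgS : ∀ p : Fin (s + 1) × Fin 2, g p ∈ S := by
      rintro ⟨i, b⟩
      have hE : ({((i : Fin (s + 1)), (0 : Fin 2)), (i, 1)} :
          Finset (Fin (s + 1) × Fin 2)) ∈ matchingHG (s + 1) :=
        Finset.mem_image.2 ⟨i, Finset.mem_univ _, rfl⟩
      have hmem : ((i, b) : Fin (s + 1) × Fin 2) ∈
          ({((i : Fin (s + 1)), (0 : Fin 2)), (i, 1)} : Finset (Fin (s + 1) × Fin 2)) := by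
        fin_cases b
        · exact Finset.mem_insert_self _ _
        · exact Finset.mem_insert_of_mem (Finset.mem_singleton_self _)
      have h1 := Finset.mem_image_of_mem g hmem
      have h2 := hsub _ hE h1
      have h3 := hφH _ hE
      exact (Finset.mem_powersetCard.1 h3).1 h2
    have himgsub : Finset.univ.image g ⊆ S := by
      intro x hx
      obtain ⟨p, -, rfl⟩ := Finset.mem_image.1 hx
      exact hgS p
    have hcard1 : (Finset.univ.image g).card = 2 * (s + 1) := by
      rw [Finset.card_image_of_injective _ hg, Finset.card_univ]
      simp [Fintype.card_prod]
      omega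
    have hle := Finset.card_le_card himgsub
    rw [hcard1, hScard] at hle
    omega
  · rw [Finset.card_powersetCard, hScard]

end Aux

/-- Theorem: for `s ≥ 1`, `s+2 ≤ r ≤ 2s` and every `n ≥ 2s+2`,
`ex_r(n, BM_{s+1}) = C(2s+1, r)`. -/
theorem exr_berge_matching_middle_r
    (s r : ℕ) (hs : 1 ≤ s) (hr1 : s + 2 ≤ r) (hr2 : r ≤ 2 * s)
    (n : ℕ) (hn : 2 * s + 2 ≤ n) :
    exr n r (fun H => ¬ ContainsBerge (matchingHG (s + 1)) H) =
      Nat.choose (2 * s + 1) r := by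
  have hn' : 2 * s + 1 ≤ n := by omega
  obtain ⟨H₀, hu₀, hf₀, hc₀⟩ := exists_extremal s r n hn'
  have hub : ∀ m ∈ {m | ∃ H : Finset (Finset (Fin n)), IsUniform r H ∧
      (¬ ContainsBerge (matchingHG (s + 1)) H) ∧ H.card = m}, m ≤ (2 * s + 1).choose r := by
    rintro m ⟨H, hu, hfree, rfl⟩
    by_contra hcon
    push_neg at hcon
    exact hfree (berge_of_large_card s r hs hr1 hr2 H hu hcon)
  apply le_antisymm
  · exact csSup_le ⟨(2 * s + 1).choose r, H₀, hu₀, hf₀, hc₀⟩ hub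
  · exact le_csSup ⟨(2 * s + 1).choose r, hub⟩ ⟨H₀, hu₀, hf₀, hc₀⟩
end

section
/- Let s ≥ 1 and r be integers with 2 ≤ r ≤ s+1, and let F be a fixed r-graph such that either χ(F) > 2, or χ(F) = 2 and F admits no strong red-blue coloring (i.e., q(F) = ∞). Then there exists n₀ such that for all n ≥ n₀, ex_r(n, BM_{s+1} ∪ {F}) = ex_r(s, D(F)) + C(s, r−1)·(n−s), where D(F) is the family of r-graphs obtained from F by deleting a (possibly empty) strongly independent set of vertices. -/
set_option linter.unusedSectionVars false
set_option maxHeartbeats 1600000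


open Finset

/-- The hypergraph with edge set `F` admits a proper `k`-coloring:
an assignment of `k` colors to the vertices with no monochromatic hyperedge. -/
def HasProperColoring {V : Type*} (k : ℕ) (F : Finset (Finset V)) : Prop :=
  ∃ c : V → Fin k, ∀ e ∈ F, ∃ u ∈ e, ∃ v ∈ e, c u ≠ c v

/-- The hypergraph with edge set `F` admits a strong red-blue coloring:
a set `red` of vertices meeting every hyperedge in exactly one vertex
(the remaining vertices being blue).  `q(F) = ∞` means no such coloring exists. -/
def HasStrongColoring {V : Type*} [DecidableEq V] (F : Finset (Finset V)) : Prop :=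
  ∃ red : Finset V, ∀ e ∈ F, (e ∩ red).card = 1

/-- `S` is a strongly independent set of the hypergraph with edge set `F`:
it meets every hyperedge in at most one vertex. -/
def StronglyIndep {V : Type*} [DecidableEq V] (F : Finset (Finset V)) (S : Finset V) : Prop :=
  ∀ e ∈ F, (e ∩ S).card ≤ 1

namespace BergeAux

variable {V : Type*} [DecidableEq V]

def deg (H : Finset (Finset V)) (v : V) : ℕ := (H.filter fun f => v ∈ f).card

def BMW (t : ℕ) (H : Finset (Finset V)) : Prop :=
  ∃ (g : Fin t × Fin 2 → V) (e : Fin t → Finset V),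
    Function.Injective g ∧ Function.Injective e ∧
      ∀ i, e i ∈ H ∧ g (i, 0) ∈ e i ∧ g (i, 1) ∈ e i

lemma bmw_zero (H : Finset (Finset V)) : BMW 0 H :=
  ⟨fun p => p.1.elim0, fun i => i.elim0, fun p => p.1.elim0, fun i => i.elim0,
    fun i => i.elim0⟩

lemma bmw_mono {t j : ℕ} {H : Finset (Finset V)} (h : BMW t H) (hj : j ≤ t) : BMW j H := by
  obtain ⟨g, e, hg, he, hmem⟩ := h
  refine ⟨fun p => g (Fin.castLE hj p.1, p.2), fun i => e (Fin.castLE hj i), ?_, ?_, ?_⟩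
  · intro p q hpq
    have h := hg hpq
    rw [Prod.mk.injEq] at h
    exact Prod.ext (Fin.castLE_injective hj h.1) h.2
  · intro i j hij
    exact Fin.castLE_injective hj (he hij)
  · intro i
    exact hmem (Fin.castLE hj i)

lemma bmw_containsBerge {t : ℕ} {H : Finset (Finset V)} (h : BMW t H) :
    ContainsBerge (matchingHG t) H := by
  classical
  obtain ⟨g, e, hg, he, hmem⟩ := h
  refine ⟨g, fun E => if h : E.Nonempty then e h.choose.1 else ∅, hg, ?_, ?_, ?_⟩
  · intro E hE E' hE' hEE'
    simp only [matchingHG, coe_image, coe_univ, Set.image_univ, Set.mem_range] at hE hE'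
    obtain ⟨i, rfl⟩ := hE
    obtain ⟨j, rfl⟩ := hE'
    have hne : ({((i : Fin t), (0 : Fin 2)), (i, 1)} : Finset (Fin t × Fin 2)).Nonempty :=
      ⟨(i, 0), by simp⟩
    have hne' : ({((j : Fin t), (0 : Fin 2)), (j, 1)} : Finset (Fin t × Fin 2)).Nonempty :=
      ⟨(j, 0), by simp⟩
    dsimp only at hEE'
    rw [dif_pos hne, dif_pos hne'] at hEE'
    have h1 : hne.choose.1 = i := by
      have := hne.choose_spec
      simp only [mem_insert, mem_singleton] at this
      rcases this with h | h <;> rw [h]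
    have h2 : hne'.choose.1 = j := by
      have := hne'.choose_spec
      simp only [mem_insert, mem_singleton] at this
      rcases this with h | h <;> rw [h]
    rw [h1, h2] at hEE'
    rw [he hEE']
  · intro E hE
    simp only [matchingHG, mem_image, mem_univ, true_and] at hE
    obtain ⟨i, rfl⟩ := hE
    have hne : ({((i : Fin t), (0 : Fin 2)), (i, 1)} : Finset (Fin t × Fin 2)).Nonempty :=
      ⟨(i, 0), by simp⟩
    dsimp only
    rw [dif_pos hne]
    have h1 : hne.choose.1 = i := by
      have := hne.choose_spec
      simp only [mem_insert, mem_singleton] at this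
      rcases this with h | h <;> rw [h]
    rw [h1]
    exact (hmem i).1
  · intro E hE
    simp only [matchingHG, mem_image, mem_univ, true_and] at hE
    obtain ⟨i, rfl⟩ := hE
    have hne : ({((i : Fin t), (0 : Fin 2)), (i, 1)} : Finset (Fin t × Fin 2)).Nonempty :=
      ⟨(i, 0), by simp⟩
    dsimp only
    rw [dif_pos hne]
    have h1 : hne.choose.1 = i := by
      have := hne.choose_spec
      simp only [mem_insert, mem_singleton] at this
      rcases this with h | h <;> rw [h]
    rw [h1]
    intro v hv
    simp only [mem_image, mem_insert, mem_singleton] at hv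
    obtain ⟨p, hp, rfl⟩ := hv
    rcases hp with rfl | rfl
    · exact (hmem i).2.1
    · exact (hmem i).2.2

lemma snoc_inj {α : Type*} {j : ℕ} {f : Fin j → α} {x : α}
    (hf : Function.Injective f) (hx : ∀ i, f i ≠ x) :
    Function.Injective (Fin.snoc f x : Fin (j+1) → α) := by
  intro a b hab
  rcases Fin.eq_castSucc_or_eq_last a with ⟨a', rfl⟩ | rfl <;>
    rcases Fin.eq_castSucc_or_eq_last b with ⟨b', rfl⟩ | rfl
  · rw [Fin.snoc_castSucc, Fin.snoc_castSucc] at hab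
    rw [hf hab]
  · rw [Fin.snoc_castSucc, Fin.snoc_last] at hab
    exact absurd hab (hx a')
  · rw [Fin.snoc_castSucc, Fin.snoc_last] at hab
    exact absurd hab.symm (hx b')
  · rfl

/-- counting edges through `a` inside `W` -/
lemma count_through_sub {r : ℕ} (H : Finset (Finset V)) (hu : ∀ f ∈ H, f.card = r)
    (a : V) (W : Finset V) :
    (H.filter fun f => a ∈ f ∧ f ⊆ W).card ≤ W.card.choose (r-1) := by
  have h1 : ∀ f ∈ H.filter fun f => a ∈ f ∧ f ⊆ W, f.erase a ∈ W.powersetCard (r-1) := by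
    intro f hf
    simp only [mem_filter] at hf
    rw [Finset.mem_powersetCard]
    refine ⟨(erase_subset _ _).trans hf.2.2, ?_⟩
    rw [Finset.card_erase_of_mem hf.2.1, hu f hf.1]
  have h2 : Set.InjOn (fun f : Finset V => f.erase a) (↑(H.filter fun f => a ∈ f ∧ f ⊆ W) : Set (Finset V)) := by
    intro f hf f' hf' he
    simp only [coe_filter, Set.mem_setOf_eq] at hf hf'
    dsimp only at he
    rw [← Finset.insert_erase hf.2.1, ← Finset.insert_erase hf'.2.1, he]
  calc (H.filter fun f => a ∈ f ∧ f ⊆ W).card ≤ (W.powersetCard (r-1)).card :=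
        Finset.card_le_card_of_injOn _ h1 h2
    _ = W.card.choose (r-1) := Finset.card_powersetCard _ _

lemma count_meet {W : Finset V} {H : Finset (Finset V)} :
    (H.filter fun f => ∃ v ∈ W, v ∈ f).card ≤ ∑ v ∈ W, (H.filter fun f => v ∈ f).card := by
  calc (H.filter fun f => ∃ v ∈ W, v ∈ f).card
      ≤ (W.biUnion fun v => H.filter fun f => v ∈ f).card := by
        apply Finset.card_le_card
        intro f hf
        simp only [mem_filter] at hf
        obtain ⟨v, hv, hvf⟩ := hf.2
        exact Finset.mem_biUnion.2 ⟨v, hv, Finset.mem_filter.2 ⟨hf.1, hvf⟩⟩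
    _ ≤ _ := Finset.card_biUnion_le

/-- crossing edges + missing edges at B₀ bound -/
lemma cross_add_missing [Fintype V] {r : ℕ} (hr : 1 ≤ r) (H : Finset (Finset V))
    (hu : ∀ f ∈ H, f.card = r) (A : Finset V) (B₀ : Finset V)
    (hB₀ : B₀ ∈ A.powersetCard (r-1)) :
    (H.filter fun f => (f ∩ A).card = r-1).card
      + ((univ \ A).filter fun v => insert v B₀ ∉ H).card
      ≤ A.card.choose (r-1) * (univ \ A).card := by
  classical
  set Cr := H.filter fun f => (f ∩ A).card = r-1 with hCr
  set Miss := (univ \ A).filter fun v => insert v B₀ ∉ H with hMiss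
  set T := (A.powersetCard (r-1)) ×ˢ ((univ \ A).powersetCard 1) with hT
  have hsd : ∀ f ∈ Cr, (f \ A).card = 1 := by
    intro f hf
    simp only [hCr, mem_filter] at hf
    have h1 := Finset.card_inter_add_card_sdiff f A
    rw [hf.2, hu f hf.1] at h1
    omega
  have hI1 : ∀ f ∈ Cr, (f ∩ A, f \ A) ∈ T := by
    intro f hf
    simp only [hCr, mem_filter] at hf
    simp only [hT, Finset.mem_product, Finset.mem_powersetCard]
    refine ⟨⟨inter_subset_right, hf.2⟩, ?_, hsd f (by simp [hCr, mem_filter, hf.1, hf.2])⟩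
    intro x hx
    simp only [mem_sdiff] at hx ⊢
    exact ⟨mem_univ x, hx.2⟩
  have hrecon : ∀ f : Finset V, (f ∩ A) ∪ (f \ A) = f := by
    intro f
    ext x; simp only [mem_union, mem_inter, mem_sdiff]; tauto
  have hinj1 : Set.InjOn (fun f => (f ∩ A, f \ A)) ↑Cr := by
    intro f hf f' hf' he
    rw [Prod.mk.injEq] at he
    rw [← hrecon f, ← hrecon f', he.1, he.2]
  have hI2 : ∀ v ∈ Miss, (B₀, ({v} : Finset V)) ∈ T := by
    intro v hv
    simp only [hMiss, mem_filter] at hv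
    simp only [hT, Finset.mem_product, Finset.mem_powersetCard]
    rw [Finset.mem_powersetCard] at hB₀
    exact ⟨hB₀, by simp [Finset.singleton_subset_iff, hv.1], Finset.card_singleton v⟩
  have hinj2 : Set.InjOn (fun v => ((B₀ : Finset V), ({v} : Finset V))) ↑Miss := by
    intro v hv v' hv' he
    rw [Prod.mk.injEq] at he
    exact Finset.singleton_injective he.2
  have hdisj : Disjoint (Cr.image fun f => (f ∩ A, f \ A))
      (Miss.image fun v => (B₀, ({v} : Finset V))) := by
    rw [Finset.disjoint_left]
    intro p hp hq
    simp only [mem_image] at hp hq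
    obtain ⟨f, hf, rfl⟩ := hp
    obtain ⟨v, hv, hpv⟩ := hq
    rw [Prod.mk.injEq] at hpv
    simp only [hMiss, mem_filter] at hv
    apply hv.2
    have hfi : f = insert v B₀ := by
      rw [← hrecon f, ← hpv.1, ← hpv.2]
      ext x; simp only [mem_union, mem_insert, mem_singleton]; tauto
    rw [← hfi]
    simp only [hCr, mem_filter] at hf
    exact hf.1
  have hcards : Cr.card + Miss.card ≤ T.card := by
    rw [← Finset.card_image_of_injOn hinj1, ← Finset.card_image_of_injOn hinj2,
      ← Finset.card_union_of_disjoint hdisj]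
    apply Finset.card_le_card
    rw [Finset.union_subset_iff]
    constructor
    · intro p hp
      simp only [mem_image] at hp
      obtain ⟨f, hf, rfl⟩ := hp
      exact hI1 f hf
    · intro p hp
      simp only [mem_image] at hp
      obtain ⟨v, hv, rfl⟩ := hp
      exact hI2 v hv
  calc Cr.card + Miss.card ≤ T.card := hcards
    _ = A.card.choose (r-1) * (univ \ A).card := by
        simp [hT, Finset.card_product, Finset.card_powersetCard, Nat.choose_one_right]

lemma cross_le [Fintype V] {r : ℕ} (hr : 1 ≤ r) (H : Finset (Finset V))
    (hu : ∀ f ∈ H, f.card = r) (A : Finset V) :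
    (H.filter fun f => (f ∩ A).card = r-1).card ≤ A.card.choose (r-1) * (univ \ A).card := by
  classical
  by_cases hle : r - 1 ≤ A.card
  · obtain ⟨B₀, hB₀sub, hB₀card⟩ := Finset.exists_subset_card_eq hle
    have := cross_add_missing hr H hu A B₀ (Finset.mem_powersetCard.2 ⟨hB₀sub, hB₀card⟩)
    omega
  · have : (H.filter fun f => (f ∩ A).card = r-1) = ∅ := by
      rw [Finset.filter_eq_empty_iff]
      intro f _ hc
      have := Finset.card_le_card (Finset.inter_subset_right (s₁ := f) (s₂ := A))
      omega
    rw [this]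
    simp

lemma inside_le {r : ℕ} (H : Finset (Finset V)) (hu : ∀ f ∈ H, f.card = r) (A : Finset V) :
    (H.filter fun f => f ⊆ A).card ≤ A.card.choose r := by
  have : (H.filter fun f => f ⊆ A) ⊆ A.powersetCard r := by
    intro f hf
    simp only [mem_filter] at hf
    exact Finset.mem_powersetCard.2 ⟨hf.2, hu f hf.1⟩
  simpa [Finset.card_powersetCard] using Finset.card_le_card this

/-- existence of an injection between finsets -/
lemma exists_injOn {α β : Type*} [DecidableEq α] [DecidableEq β] [Nonempty β]
    (S : Finset α) (T : Finset β) (h : S.card ≤ T.card) :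
    ∃ f : α → β, Set.InjOn f ↑S ∧ ∀ x ∈ S, f x ∈ T := by
  classical
  obtain ⟨T', hT'sub, hT'card⟩ := Finset.exists_subset_card_eq h
  have e1 : {x // x ∈ S} ≃ Fin S.card := Fintype.equivFinOfCardEq (Fintype.card_coe S)
  have e2 : {x // x ∈ T'} ≃ Fin S.card := Fintype.equivFinOfCardEq
    (by rw [Fintype.card_coe, hT'card])
  refine ⟨fun x => if hx : x ∈ S then (e2.symm (e1 ⟨x, hx⟩) : β) else Classical.arbitrary β,
    ?_, ?_⟩
  · intro x hx y hy hxy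
    simp only [Finset.mem_coe] at hx hy
    dsimp only at hxy
    rw [dif_pos hx, dif_pos hy] at hxy
    have := e1.injective (e2.symm.injective (Subtype.ext hxy))
    exact congrArg Subtype.val (this : (⟨x, hx⟩ : {x // x ∈ S}) = ⟨y, hy⟩)
  · intro x hx
    dsimp only
    rw [dif_pos hx]
    exact hT'sub (e2.symm (e1 ⟨x, hx⟩)).2

/-- the key "BMW extension" step -/
lemma bmw_succ {t : ℕ} {H : Finset (Finset V)} (g : Fin t × Fin 2 → V) (e : Fin t → Finset V)
    (hg : Function.Injective g) (he : Function.Injective e)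
    (hmem : ∀ i, e i ∈ H ∧ g (i, 0) ∈ e i ∧ g (i, 1) ∈ e i)
    (f : Finset V) (hf : f ∈ H) (hfe : ∀ i, f ≠ e i)
    (x y : V) (hx : x ∈ f) (hy : y ∈ f) (hxy : x ≠ y)
    (hxg : ∀ p, g p ≠ x) (hyg : ∀ p, g p ≠ y) : BMW (t+1) H := by
  refine ⟨fun p => if h : (p.1 : ℕ) < t then g (⟨p.1, h⟩, p.2) else (if p.2 = 0 then x else y),
    fun i => if h : (i : ℕ) < t then e ⟨i, h⟩ else f, ?_, ?_, ?_⟩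
  · rintro ⟨i, a⟩ ⟨j, b⟩ hab
    dsimp only at hab
    by_cases hi : (i : ℕ) < t <;> by_cases hj : (j : ℕ) < t
    · rw [dif_pos hi, dif_pos hj] at hab
      have := hg hab
      rw [Prod.mk.injEq] at this
      have h1 := this.1
      simp only [Fin.mk.injEq] at h1
      exact Prod.ext (Fin.ext h1) this.2
    · rw [dif_pos hi, dif_neg hj] at hab
      by_cases hb : b = 0
      · rw [if_pos hb] at hab; exact absurd hab (hxg _)
      · rw [if_neg hb] at hab; exact absurd hab (hyg _)
    · rw [dif_neg hi, dif_pos hj] at hab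
      by_cases ha : a = 0
      · rw [if_pos ha] at hab; exact absurd hab.symm (hxg _)
      · rw [if_neg ha] at hab; exact absurd hab.symm (hyg _)
    · rw [dif_neg hi, dif_neg hj] at hab
      have hij : i = j := by
        apply Fin.ext
        have := i.isLt; have := j.isLt
        omega
      have hab2 : a = b := by
        by_cases ha : a = 0 <;> by_cases hb : b = 0
        · rw [ha, hb]
        · rw [if_pos ha, if_neg hb] at hab; exact absurd hab hxy
        · rw [if_neg ha, if_pos hb] at hab; exact absurd hab.symm hxy
        · have := a.isLt; have := b.isLt
          apply Fin.ext
          have ha' : (a : ℕ) ≠ 0 := fun h => ha (Fin.ext h)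
          have hb' : (b : ℕ) ≠ 0 := fun h => hb (Fin.ext h)
          omega
      exact Prod.ext hij hab2
  · intro i j hij
    dsimp only at hij
    by_cases hi : (i : ℕ) < t <;> by_cases hj : (j : ℕ) < t
    · rw [dif_pos hi, dif_pos hj] at hij
      have := he hij
      apply Fin.ext
      exact congrArg (fun z : Fin t => (z : ℕ)) this
    · rw [dif_pos hi, dif_neg hj] at hij
      exact absurd hij.symm (hfe _)
    · rw [dif_neg hi, dif_pos hj] at hij
      exact absurd hij (hfe _)
    · apply Fin.ext
      have := i.isLt; have := j.isLt
      omega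
  · intro i
    by_cases hi : (i : ℕ) < t
    · simp only [dif_pos hi]
      exact hmem ⟨i, hi⟩
    · simp only [dif_neg hi]
      refine ⟨hf, ?_, ?_⟩
      · norm_num
        exact hx
      · norm_num
        exact hy

/-- greedy construction of a Berge matching from high-degree vertices -/
lemma bmw_of_highdeg {r : ℕ} (H : Finset (Finset V)) (hu : ∀ f ∈ H, f.card = r)
    (k : ℕ) (w : Fin k → V) (hw : Function.Injective w)
    (hdeg : ∀ i, k + (2*k).choose (r-1) < deg H (w i)) : BMW k H := by
  classical
  have key : ∀ jj : ℕ, jj ≤ k → ∃ (ff : Fin jj → Finset V) (yy : Fin jj → V),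
      Function.Injective ff ∧ Function.Injective yy ∧
      ∀ i : Fin jj, ff i ∈ H ∧ (∀ hv : (i : ℕ) < k, w ⟨i, hv⟩ ∈ ff i) ∧ yy i ∈ ff i ∧
        yy i ∉ Finset.image w Finset.univ := by
    intro jj
    induction jj with
    | zero =>
      intro _
      exact ⟨fun i => i.elim0, fun i => i.elim0, fun i => i.elim0, fun i => i.elim0,
        fun i => i.elim0⟩
    | succ j ih =>
      intro hjk
      obtain ⟨ff, yy, hffinj, hyyinj, hprop⟩ := ih (Nat.le_of_succ_le hjk)
      have hjlt : j < k := hjk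
      set W : Finset V := Finset.image w Finset.univ ∪ Finset.image yy Finset.univ with hW
      have hWcard : W.card ≤ 2*k := by
        calc W.card ≤ (Finset.image w Finset.univ).card + (Finset.image yy Finset.univ).card :=
              Finset.card_union_le _ _
          _ ≤ k + j := by
              gcongr <;> [skip; skip] <;>
                calc _ ≤ (Finset.univ : Finset _).card := Finset.card_image_le
                  _ = _ := by simp
          _ ≤ 2*k := by omega
      -- find a fresh edge through w_j
      have hex : ∃ f ∈ H, w ⟨j, hjlt⟩ ∈ f ∧ (∀ i, f ≠ ff i) ∧ ¬ f ⊆ W := by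
        by_contra hcon
        push_neg at hcon
        have hsub : H.filter (fun f => w ⟨j, hjlt⟩ ∈ f) ⊆
            (Finset.image ff Finset.univ) ∪ H.filter (fun f => w ⟨j, hjlt⟩ ∈ f ∧ f ⊆ W) := by
          intro f hf
          simp only [mem_filter] at hf
          rcases em (∃ i, f = ff i) with ⟨i, rfl⟩ | hnew
          · exact Finset.mem_union_left _ (Finset.mem_image_of_mem _ (Finset.mem_univ i))
          · push_neg at hnew
            exact Finset.mem_union_right _
              (Finset.mem_filter.2 ⟨hf.1, hf.2, hcon f hf.1 hf.2 hnew⟩)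
        have hcount : deg H (w ⟨j, hjlt⟩) ≤ j + (2*k).choose (r-1) := by
          calc deg H (w ⟨j, hjlt⟩)
              ≤ ((Finset.image ff Finset.univ) ∪
                  H.filter (fun f => w ⟨j, hjlt⟩ ∈ f ∧ f ⊆ W)).card :=
                Finset.card_le_card hsub
            _ ≤ (Finset.image ff Finset.univ).card +
                  (H.filter (fun f => w ⟨j, hjlt⟩ ∈ f ∧ f ⊆ W)).card :=
                Finset.card_union_le _ _
            _ ≤ j + (2*k).choose (r-1) := by
                gcongr
                · calc _ ≤ (Finset.univ : Finset (Fin j)).card := Finset.card_image_le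
                    _ = j := by simp
                · calc (H.filter (fun f => w ⟨j, hjlt⟩ ∈ f ∧ f ⊆ W)).card
                      ≤ W.card.choose (r-1) := by
                        have h1 : ∀ f ∈ H.filter fun f => w ⟨j, hjlt⟩ ∈ f ∧ f ⊆ W,
                            f.erase (w ⟨j, hjlt⟩) ∈ W.powersetCard (r-1) := by
                          intro f hf
                          simp only [mem_filter] at hf
                          rw [Finset.mem_powersetCard]
                          refine ⟨(erase_subset _ _).trans hf.2.2, ?_⟩
                          rw [Finset.card_erase_of_mem hf.2.1, hu f hf.1]
                        have h2 : Set.InjOn (fun f : Finset V => f.erase (w ⟨j, hjlt⟩))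
                            (↑(H.filter fun f => w ⟨j, hjlt⟩ ∈ f ∧ f ⊆ W) : Set (Finset V)) := by
                          intro f hf f' hf' he
                          simp only [coe_filter, Set.mem_setOf_eq] at hf hf'
                          dsimp only at he
                          rw [← Finset.insert_erase hf.2.1, ← Finset.insert_erase hf'.2.1, he]
                        calc _ ≤ (W.powersetCard (r-1)).card :=
                              Finset.card_le_card_of_injOn _ h1 h2
                          _ = W.card.choose (r-1) := Finset.card_powersetCard _ _
                    _ ≤ (2*k).choose (r-1) := Nat.choose_le_choose _ hWcard
        have := hdeg ⟨j, hjlt⟩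
        omega
      obtain ⟨f, hfH, hwf, hfnew, hfW⟩ := hex
      obtain ⟨y', hy'f, hy'W⟩ : ∃ y' ∈ f, y' ∉ W := by
        by_contra hcon
        push_neg at hcon
        exact hfW (fun z hz => hcon z hz)
      refine ⟨Fin.snoc ff f, Fin.snoc yy y', ?_, ?_, ?_⟩
      · exact snoc_inj hffinj (fun i h => hfnew i h.symm)
      · apply snoc_inj hyyinj
        intro i h
        apply hy'W
        rw [← h]
        exact Finset.mem_union_right _ (Finset.mem_image_of_mem _ (Finset.mem_univ i))
      · intro i
        rcases Fin.eq_castSucc_or_eq_last i with ⟨i', rfl⟩ | rfl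
        · simp only [Fin.snoc_castSucc]
          have := hprop i'
          refine ⟨this.1, ?_, this.2.2.1, this.2.2.2⟩
          intro hv
          have := this.2.1
          simp only [Fin.coe_castSucc]
          exact this (by simpa using hv)
        · simp only [Fin.snoc_last]
          refine ⟨hfH, ?_, hy'f, ?_⟩
          · intro hv
            have : (Fin.last j : ℕ) = j := rfl
            convert hwf using 2
            exact Fin.ext this
          · intro hc
            exact hy'W (Finset.mem_union_left _ hc)
  obtain ⟨ff, yy, hffinj, hyyinj, hprop⟩ := key k le_rfl
  refine ⟨fun p => if p.2 = 0 then w p.1 else yy p.1, ff, ?_, hffinj, ?_⟩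
  · rintro ⟨i, a⟩ ⟨j, b⟩ hab
    dsimp only at hab
    have hwy : ∀ i' j' : Fin k, w i' ≠ yy j' := by
      intro i' j' h
      exact (hprop j').2.2.2 (h ▸ Finset.mem_image_of_mem _ (Finset.mem_univ i'))
    by_cases ha : a = 0 <;> by_cases hb : b = 0
    · rw [if_pos ha, if_pos hb] at hab
      exact Prod.ext (hw hab) (ha.trans hb.symm)
    · rw [if_pos ha, if_neg hb] at hab
      exact absurd hab (hwy _ _)
    · rw [if_neg ha, if_pos hb] at hab
      exact absurd hab.symm (hwy _ _)
    · rw [if_neg ha, if_neg hb] at hab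
      have hab' : a = b := by
        have := a.isLt; have := b.isLt
        apply Fin.ext
        have ha' : (a : ℕ) ≠ 0 := fun h => ha (Fin.ext h)
        have hb' : (b : ℕ) ≠ 0 := fun h => hb (Fin.ext h)
        omega
      exact Prod.ext (hyyinj hab) hab'
  · intro i
    refine ⟨(hprop i).1, ?_, ?_⟩
    · simp only [if_pos rfl]
      have := (hprop i).2.1 i.isLt
      simpa using this
    · have h1 : ((1 : Fin 2) = 0) = False := by simp
      simp only [h1, if_false]
      exact (hprop i).2.2.1
lemma exr_eq_of {n r : ℕ} {Free : Finset (Finset (Fin n)) → Prop} {a : ℕ}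
    (ha : ∃ H, IsUniform r H ∧ Free H ∧ H.card = a)
    (hb : ∀ H : Finset (Finset (Fin n)), IsUniform r H → Free H → H.card ≤ a) :
    exr n r Free = a := by
  have hbdd : a ∈ upperBounds {m | ∃ H : Finset (Finset (Fin n)),
      IsUniform r H ∧ Free H ∧ H.card = m} := by
    rintro b ⟨H, h1, h2, rfl⟩
    exact hb H h1 h2
  apply le_antisymm
  · exact csSup_le ⟨a, ha⟩ hbdd
  · exact le_csSup ⟨a, hbdd⟩ ha

lemma exr_attained {n r : ℕ} {Free : Finset (Finset (Fin n)) → Prop}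
    (hW : ∃ H, IsUniform r H ∧ Free H) :
    ∃ H, IsUniform r H ∧ Free H ∧ H.card = exr n r Free := by
  obtain ⟨H, h1, h2⟩ := hW
  have hne : {m | ∃ H : Finset (Finset (Fin n)), IsUniform r H ∧ Free H ∧ H.card = m}.Nonempty :=
    ⟨H.card, H, h1, h2, rfl⟩
  have hbdd : BddAbove {m | ∃ H : Finset (Finset (Fin n)),
      IsUniform r H ∧ Free H ∧ H.card = m} := by
    refine ⟨Fintype.card (Finset (Fin n)), ?_⟩
    rintro b ⟨H', _, _, rfl⟩
    exact Finset.card_le_univ H'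
  obtain ⟨H', h1', h2', h3'⟩ := Nat.sSup_mem hne hbdd
  exact ⟨H', h1', h2', h3'.symm ▸ rfl⟩

lemma exr_le {n r : ℕ} {Free : Finset (Finset (Fin n)) → Prop}
    (H : Finset (Finset (Fin n))) (h1 : IsUniform r H) (h2 : Free H) :
    H.card ≤ exr n r Free := by
  have hbdd : BddAbove {m | ∃ H : Finset (Finset (Fin n)),
      IsUniform r H ∧ Free H ∧ H.card = m} := by
    refine ⟨Fintype.card (Finset (Fin n)), ?_⟩
    rintro b ⟨H', _, _, rfl⟩
    exact Finset.card_le_univ H'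
  exact le_csSup hbdd ⟨H, h1, h2, rfl⟩

/-- The lower-bound construction. -/
lemma lower_bound (s r m n : ℕ) (hs : 1 ≤ s) (hr : 2 ≤ r) (hsn : s ≤ n)
    (F : Finset (Finset (Fin m))) (hFu : IsUniform r F)
    (H₀ : Finset (Finset (Fin s))) (hH₀u : IsUniform r H₀)
    (hH₀f : ∀ S, StronglyIndep F S →
      ¬ ContainsCopy (Finset.univ \ S) (F.filter fun e => Disjoint e S) H₀) :
    ∃ H : Finset (Finset (Fin n)), IsUniform r H ∧
      (¬ ContainsBerge (matchingHG (s + 1)) H ∧ ¬ ContainsCopy Finset.univ F H) ∧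
      H.card = H₀.card + s.choose (r-1) * (n - s) := by
  classical
  set ι : Fin s → Fin n := Fin.castLE hsn with hι
  have hιinj : Function.Injective ι := Fin.castLE_injective hsn
  set A₀ : Finset (Fin n) := Finset.image ι Finset.univ with hA₀
  have hA₀card : A₀.card = s := by
    rw [hA₀, Finset.card_image_of_injective _ hιinj, Finset.card_univ, Fintype.card_fin]
  have hcompl : (univ \ A₀).card = n - s := by
    rw [Finset.card_sdiff_of_subset (Finset.subset_univ _), Finset.card_univ, Fintype.card_fin, hA₀card]
  set Hlow : Finset (Finset (Fin n)) := H₀.image (Finset.image ι) ∪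
    ((A₀.powersetCard (r-1)) ×ˢ (univ \ A₀)).image (fun p => insert p.2 p.1) with hHlow
  -- membership characterizations
  have hmem1 : ∀ E ∈ H₀.image (Finset.image ι), E ⊆ A₀ ∧ E.card = r := by
    intro E hE
    simp only [Finset.mem_image] at hE
    obtain ⟨f, hf, rfl⟩ := hE
    constructor
    · intro x hx
      simp only [Finset.mem_image] at hx
      obtain ⟨i, _, rfl⟩ := hx
      exact Finset.mem_image_of_mem _ (Finset.mem_univ i)
    · rw [Finset.card_image_of_injective _ hιinj, hH₀u f hf]
  have hmem2 : ∀ E ∈ ((A₀.powersetCard (r-1)) ×ˢ (univ \ A₀)).image (fun p => insert p.2 p.1),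
      ∃ B v, B ⊆ A₀ ∧ B.card = r - 1 ∧ v ∉ A₀ ∧ E = insert v B := by
    intro E hE
    simp only [Finset.mem_image, Finset.mem_product, Finset.mem_powersetCard,
      Finset.mem_sdiff] at hE
    obtain ⟨⟨B, v⟩, ⟨⟨hB1, hB2⟩, _, hv⟩, rfl⟩ := hE
    exact ⟨B, v, hB1, hB2, hv, rfl⟩
  have hkey : ∀ E ∈ Hlow, (E \ A₀).card ≤ 1 := by
    intro E hE
    rw [hHlow, Finset.mem_union] at hE
    rcases hE with hE | hE
    · have := (hmem1 E hE).1
      have : E \ A₀ = ∅ := Finset.sdiff_eq_empty_iff_subset.2 this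
      simp [this]
    · obtain ⟨B, v, hB1, _, hv, rfl⟩ := hmem2 E hE
      have : insert v B \ A₀ ⊆ {v} := by
        intro x hx
        simp only [Finset.mem_sdiff, Finset.mem_insert] at hx
        rcases hx.1 with rfl | hxB
        · exact Finset.mem_singleton_self x
        · exact absurd (hB1 hxB) hx.2
      calc (insert v B \ A₀).card ≤ ({v} : Finset (Fin n)).card := Finset.card_le_card this
        _ = 1 := Finset.card_singleton v
  refine ⟨Hlow, ?_, ⟨?_, ?_⟩, ?_⟩
  · -- uniform
    intro E hE
    rw [hHlow, Finset.mem_union] at hE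
    rcases hE with hE | hE
    · exact (hmem1 E hE).2
    · obtain ⟨B, v, hB1, hB2, hv, rfl⟩ := hmem2 E hE
      rw [Finset.card_insert_of_notMem (fun h => hv (hB1 h)), hB2]
      omega
  · -- Berge matching free
    rintro ⟨g, φ, hginj, hφinj, hφmem, hφsub⟩
    have hpairmem : ∀ i : Fin (s+1),
        ({(i, 0), (i, 1)} : Finset (Fin (s+1) × Fin 2)) ∈ matchingHG (s+1) :=
      fun i => Finset.mem_image_of_mem _ (Finset.mem_univ i)
    have hgin : ∀ (i : Fin (s+1)) (a : Fin 2),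
        g (i, a) ∈ φ ({(i, 0), (i, 1)} : Finset (Fin (s+1) × Fin 2)) := by
      intro i a
      apply hφsub _ (hpairmem i)
      apply Finset.mem_image_of_mem
      have ha : a = 0 ∨ a = 1 := by fin_cases a <;> simp
      rcases ha with rfl | rfl
      · exact Finset.mem_insert_self _ _
      · simp
    set c : Fin (s+1) → Fin n := fun i => if g (i, 0) ∈ A₀ then g (i, 0) else g (i, 1) with hc
    have hcA : ∀ i, c i ∈ A₀ := by
      intro i
      rw [hc]
      dsimp only
      by_cases h0 : g (i, 0) ∈ A₀
      · rw [if_pos h0]; exact h0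
      · rw [if_neg h0]
        by_contra h1
        have h2 : 2 ≤ ((φ ({(i, 0), (i, 1)} : Finset (Fin (s+1) × Fin 2))) \ A₀).card := by
          apply Finset.one_lt_card.2
          refine ⟨g (i, 0), ?_, g (i, 1), ?_, ?_⟩
          · exact Finset.mem_sdiff.2 ⟨hgin i 0, h0⟩
          · exact Finset.mem_sdiff.2 ⟨hgin i 1, h1⟩
          · intro h
            have := hginj h
            simp only [Prod.mk.injEq] at this
            exact absurd this.2 (by decide)
        have := hkey _ (hφmem _ (hpairmem i))
        omega
    have hcinj : Function.Injective c := by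
      intro i j hij
      by_contra hne
      have hval : ∀ (a b : Fin 2), g (i, a) ≠ g (j, b) := by
        intro a b h
        have := hginj h
        simp only [Prod.mk.injEq] at this
        exact hne this.1
      rw [hc] at hij
      dsimp only at hij
      by_cases h1 : g (i, 0) ∈ A₀ <;> by_cases h2 : g (j, 0) ∈ A₀
      · rw [if_pos h1, if_pos h2] at hij; exact hval 0 0 hij
      · rw [if_pos h1, if_neg h2] at hij; exact hval 0 1 hij
      · rw [if_neg h1, if_pos h2] at hij; exact hval 1 0 hij
      · rw [if_neg h1, if_neg h2] at hij; exact hval 1 1 hij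
    have : s + 1 ≤ s := by
      calc s + 1 = (Finset.univ : Finset (Fin (s+1))).card := by simp
        _ = (Finset.image c Finset.univ).card :=
          (Finset.card_image_of_injective _ hcinj).symm
        _ ≤ A₀.card := Finset.card_le_card (by
            intro x hx
            simp only [Finset.mem_image] at hx
            obtain ⟨i, _, rfl⟩ := hx
            exact hcA i)
        _ = s := hA₀card
    omega
  · -- F-free
    rintro ⟨g, hg, hmap⟩
    have hginj : Function.Injective g := by
      intro x y h
      exact hg (by simp) (by simp) h
    set S : Finset (Fin m) := Finset.univ.filter (fun x => g x ∉ A₀) with hS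
    have hSind : StronglyIndep F S := by
      intro e he
      have h1 : (e ∩ S).image g ⊆ (e.image g) \ A₀ := by
        intro x hx
        simp only [Finset.mem_image, Finset.mem_inter, hS, Finset.mem_filter] at hx
        obtain ⟨z, ⟨hz1, _, hz2⟩, rfl⟩ := hx
        exact Finset.mem_sdiff.2 ⟨Finset.mem_image_of_mem _ hz1, hz2⟩
      calc (e ∩ S).card = ((e ∩ S).image g).card :=
            (Finset.card_image_of_injective _ hginj).symm
        _ ≤ ((e.image g) \ A₀).card := Finset.card_le_card h1
        _ ≤ 1 := hkey _ (hmap e he)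
    apply hH₀f S hSind
    set π : Fin n → Fin s := fun v => if h : (v : ℕ) < s then ⟨v, h⟩ else ⟨0, hs⟩ with hπ
    have hπι : ∀ i : Fin s, π (ι i) = i := by
      intro i
      rw [hπ, hι]
      dsimp only
      rw [dif_pos (by simpa using i.isLt)]
      exact Fin.ext rfl
    have hπA : ∀ v ∈ A₀, ι (π v) = v := by
      intro v hv
      simp only [hA₀, Finset.mem_image] at hv
      obtain ⟨i, _, rfl⟩ := hv
      rw [hπι]
    refine ⟨π ∘ g, ?_, ?_⟩
    · intro x hx y hy hxy
      have hx' := Finset.mem_sdiff.1 (Finset.mem_coe.1 hx)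
      have hy' := Finset.mem_sdiff.1 (Finset.mem_coe.1 hy)
      have hgx : g x ∈ A₀ := by
        by_contra h
        exact hx'.2 (Finset.mem_filter.2 ⟨Finset.mem_univ x, h⟩)
      have hgy : g y ∈ A₀ := by
        by_contra h
        exact hy'.2 (Finset.mem_filter.2 ⟨Finset.mem_univ y, h⟩)
      have : g x = g y := by
        rw [← hπA _ hgx, ← hπA _ hgy]
        simp only [Function.comp_apply] at hxy
        rw [hxy]
      exact hginj this
    · intro e he
      simp only [Finset.mem_filter] at he
      have hesub : ∀ x ∈ e, g x ∈ A₀ := by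
        intro x hx
        by_contra h
        have hxS : x ∈ S := Finset.mem_filter.2 ⟨Finset.mem_univ x, h⟩
        exact (Finset.disjoint_left.1 he.2) hx hxS
      have hEA : e.image g ⊆ A₀ := by
        intro v hv
        simp only [Finset.mem_image] at hv
        obtain ⟨x, hx, rfl⟩ := hv
        exact hesub x hx
      have hEmem : e.image g ∈ Hlow := hmap e he.1
      rw [hHlow, Finset.mem_union] at hEmem
      rcases hEmem with hE | hE
      · simp only [Finset.mem_image] at hE
        obtain ⟨f, hf, hfE⟩ := hE
        have : e.image (π ∘ g) = f := by
          rw [← Finset.image_image (g := π) (f := g), ← hfE, Finset.image_image]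
          calc f.image (π ∘ ι) = f.image id := Finset.image_congr (fun i _ => hπι i)
            _ = f := Finset.image_id
        rw [this]
        exact hf
      · obtain ⟨B, v, _, _, hv, hEeq⟩ := hmem2 _ hE
        exfalso
        apply hv
        apply hEA
        rw [hEeq]
        exact Finset.mem_insert_self v B
  · -- cardinality
    rw [hHlow]
    rw [Finset.card_union_of_disjoint]
    · congr 1
      · apply Finset.card_image_of_injOn
        intro f hf f' hf' he
        have : Function.Injective (Finset.image ι) := Finset.image_injective hιinj
        exact this he
      · rw [Finset.card_image_of_injOn, Finset.card_product, Finset.card_powersetCard,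
          hA₀card, hcompl]
        intro p hp q hq hpq
        simp only [Finset.mem_coe, Finset.mem_product, Finset.mem_powersetCard,
          Finset.mem_sdiff] at hp hq
        dsimp only at hpq
        have hp2 : p.2 ∉ p.1 := fun h => hp.2.2 (hp.1.1 h)
        have hq2 : q.2 ∉ q.1 := fun h => hq.2.2 (hq.1.1 h)
        have h22 : p.2 = q.2 := by
          have hp2q : p.2 ∈ insert q.2 q.1 := hpq ▸ Finset.mem_insert_self p.2 p.1
          rcases Finset.mem_insert.1 hp2q with h | h
          · exact h
          · exact absurd (hq.1.1 h) hp.2.2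
        have h11 : p.1 = q.1 := by
          apply Finset.Subset.antisymm
          · intro x hx
            have : x ∈ insert q.2 q.1 := hpq ▸ Finset.mem_insert_of_mem hx
            rcases Finset.mem_insert.1 this with rfl | h
            · exact absurd (hp.1.1 hx) hq.2.2
            · exact h
          · intro x hx
            have : x ∈ insert p.2 p.1 := hpq ▸ Finset.mem_insert_of_mem hx
            rcases Finset.mem_insert.1 this with rfl | h
            · exact absurd (hq.1.1 hx) hp.2.2
            · exact h
        exact Prod.ext h11 h22
    · rw [Finset.disjoint_left]
      intro E hE hE'
      have h1 := (hmem1 E hE).1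
      obtain ⟨B, v, _, _, hv, rfl⟩ := hmem2 E hE'
      exact hv (h1 (Finset.mem_insert_self v B))



/-- The upper bound. -/
lemma upper_bound (s r m n : ℕ) (hs : 1 ≤ s) (hr : 2 ≤ r) (hrs : r ≤ s + 1)
    (F : Finset (Finset (Fin m))) (hFu : IsUniform r F)
    (M : ℕ)
    (hM : ∀ H₀ : Finset (Finset (Fin s)), IsUniform r H₀ →
      (∀ S, StronglyIndep F S →
        ¬ ContainsCopy (Finset.univ \ S) (F.filter fun e => Disjoint e S) H₀) →
      H₀.card ≤ M)
    (hn : s + (s * ((s-1).choose (r-1)) + s.choose r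
          + (s + 2*s*((s+1) + (2*(s+1)).choose (r-1))))
        + s.choose (r-1) * ((s + 2*s*((s+1) + (2*(s+1)).choose (r-1))) + s.choose r)
        + m + s + 2 ≤ n)
    (H : Finset (Finset (Fin n))) (hu : IsUniform r H)
    (hBMfree : ¬ ContainsBerge (matchingHG (s+1)) H)
    (hFfree : ¬ ContainsCopy Finset.univ F H) :
    H.card ≤ M + s.choose (r-1) * (n - s) := by
  classical
  obtain ⟨X1, hX1⟩ : ∃ x, x = s * ((s-1).choose (r-1)) := ⟨_, rfl⟩
  obtain ⟨X2, hX2⟩ : ∃ x, x = s.choose (r-1) *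
    ((s + 2*s*((s+1) + (2*(s+1)).choose (r-1))) + s.choose r) := ⟨_, rfl⟩
  rw [← hX1, ← hX2] at hn
  set D₀ : ℕ := (s+1) + (2*(s+1)).choose (r-1) with hD₀
  set c₆ : ℕ := s + 2*s*D₀ with hc₆
  set K : ℕ := c₆ + s.choose r with hK
  set q : ℕ := (s-1).choose (r-1) with hq
  set P : ℕ := s.choose (r-1) with hP
  have hsn : s ≤ n := by omega
  have hnot : ¬ BMW (s+1) H := fun h => hBMfree (bmw_containsBerge h)
  -- maximal Berge matching
  set T : Set ℕ := {t | BMW t H} with hT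
  have hbddT : ∀ t' ∈ T, t' ≤ s := by
    intro t' ht'
    by_contra hgt
    exact hnot (bmw_mono ht' (by omega))
  have hTne : T.Nonempty := ⟨0, bmw_zero H⟩
  have hTbdd : BddAbove T := ⟨s, fun x hx => hbddT x hx⟩
  set t : ℕ := sSup T with ht
  have htT : t ∈ T := Nat.sSup_mem hTne hTbdd
  have hts : t ≤ s := hbddT t htT
  have hmax : ¬ BMW (t+1) H := by
    intro h
    have : t + 1 ≤ t := le_csSup hTbdd h
    omega
  obtain ⟨g, e, hg, he, hmem⟩ := htT
  set U : Finset (Fin n) := Finset.image g Finset.univ with hU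
  set Eset : Finset (Finset (Fin n)) := Finset.image e Finset.univ with hEset
  have hUcard : U.card ≤ 2*s := by
    calc U.card ≤ (Finset.univ : Finset (Fin t × Fin 2)).card := Finset.card_image_le
      _ = t * 2 := by simp [Fintype.card_prod]
      _ ≤ 2*s := by omega
  have hEcard : Eset.card ≤ s := by
    calc Eset.card ≤ (Finset.univ : Finset (Fin t)).card := Finset.card_image_le
      _ = t := by simp
      _ ≤ s := hts
  have hmaxcons : ∀ f ∈ H, f ∉ Eset → r - 1 ≤ (f ∩ U).card := by
    intro f hf hfE
    by_contra hlt
    push_neg at hlt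
    have hsum := Finset.card_inter_add_card_sdiff f U
    rw [hu f hf] at hsum
    have h2 : 2 ≤ (f \ U).card := by omega
    obtain ⟨x, hx, y, hy, hxy⟩ := Finset.one_lt_card.1 h2
    have hxU := (Finset.mem_sdiff.1 hx).2
    have hyU := (Finset.mem_sdiff.1 hy).2
    have hfe : ∀ i, f ≠ e i := by
      intro i hfi
      exact hfE (hfi ▸ Finset.mem_image_of_mem _ (Finset.mem_univ i))
    apply hmax
    exact bmw_succ g e hg he hmem f hf hfe x y (Finset.mem_sdiff.1 hx).1
      (Finset.mem_sdiff.1 hy).1 hxy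
      (fun p hp => hxU (hp ▸ Finset.mem_image_of_mem _ (Finset.mem_univ p)))
      (fun p hp => hyU (hp ▸ Finset.mem_image_of_mem _ (Finset.mem_univ p)))
  -- high degree vertices
  set A : Finset (Fin n) := Finset.univ.filter (fun v => D₀ < deg H v) with hA
  have hAcard : A.card ≤ s := by
    by_contra hgt
    push_neg at hgt
    obtain ⟨A', hA'sub, hA'card⟩ := Finset.exists_subset_card_eq (show s+1 ≤ A.card by omega)
    have eqA' : {x // x ∈ A'} ≃ Fin (s+1) :=
      Fintype.equivFinOfCardEq (by rw [Fintype.card_coe, hA'card])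
    set w : Fin (s+1) → Fin n := fun i => (eqA'.symm i : Fin n) with hw
    have hwinj : Function.Injective w := by
      intro i j hij
      exact eqA'.symm.injective (Subtype.ext hij)
    have hwdeg : ∀ i, (s+1) + (2*(s+1)).choose (r-1) < deg H (w i) := by
      intro i
      have hwA : w i ∈ A := hA'sub (eqA'.symm i).2
      rw [hA] at hwA
      exact (Finset.mem_filter.1 hwA).2
    exact hnot (bmw_of_highdeg H hu (s+1) w hwinj hwdeg)
  have hcomplA : (Finset.univ \ A).card = n - A.card := by
    rw [Finset.card_sdiff_of_subset (Finset.subset_univ _), Finset.card_univ, Fintype.card_fin]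
  -- partition of H
  set cIn : ℕ := (H.filter fun f => f ⊆ A).card with hcIn
  set cCross : ℕ := (H.filter fun f => (f ∩ A).card = r-1).card with hcCross
  set cBad : ℕ := (H.filter fun f => ¬ f ⊆ A ∧ (f ∩ A).card ≠ r-1).card with hcBad
  have hsubeq : ∀ f ∈ H, (f ∩ A).card = r → f ⊆ A := by
    intro f hf hcard
    have h1 : f ∩ A = f := by
      apply Finset.eq_of_subset_of_card_le Finset.inter_subset_left
      rw [hcard, hu f hf]
    intro x hx
    rw [← h1] at hx
    exact (Finset.mem_inter.1 hx).2
  have hsplit : H.card = cIn + cCross + cBad := by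
    have e1 : H.card = cIn + (H.filter fun f => ¬ f ⊆ A).card := by
      rw [hcIn]
      exact (Finset.card_filter_add_card_filter_not _).symm
    have e2 : (H.filter fun f => ¬ f ⊆ A).card =
        ((H.filter fun f => ¬ f ⊆ A).filter fun f => (f ∩ A).card = r-1).card +
        ((H.filter fun f => ¬ f ⊆ A).filter fun f => ¬ (f ∩ A).card = r-1).card :=
      (Finset.card_filter_add_card_filter_not _).symm
    have e3 : ((H.filter fun f => ¬ f ⊆ A).filter fun f => (f ∩ A).card = r-1) =
        (H.filter fun f => (f ∩ A).card = r-1) := by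
      rw [Finset.filter_filter]
      apply Finset.filter_congr
      intro f hf
      constructor
      · exact fun h => h.2
      · intro h
        refine ⟨?_, h⟩
        intro hsub
        have : f ∩ A = f := Finset.inter_eq_left.2 hsub
        rw [this, hu f hf] at h
        omega
    have e4 : ((H.filter fun f => ¬ f ⊆ A).filter fun f => ¬ (f ∩ A).card = r-1) =
        (H.filter fun f => ¬ f ⊆ A ∧ (f ∩ A).card ≠ r-1) := by
      rw [Finset.filter_filter]
    rw [e1, e2, e3, e4, hcCross, hcBad]
    ring
  -- bound on bad edges
  have hBadle : cBad ≤ c₆ := by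
    have hsub : (H.filter fun f => ¬ f ⊆ A ∧ (f ∩ A).card ≠ r-1) ⊆
        Eset ∪ (H.filter fun f => ∃ v ∈ U \ A, v ∈ f) := by
      intro f hf
      simp only [Finset.mem_filter] at hf
      obtain ⟨hfH, hnsub, hne⟩ := hf
      by_cases hfE : f ∈ Eset
      · exact Finset.mem_union_left _ hfE
      · apply Finset.mem_union_right
        rw [Finset.mem_filter]
        refine ⟨hfH, ?_⟩
        by_contra hcon
        push_neg at hcon
        have hUA : f ∩ U ⊆ f ∩ A := by
          intro x hx
          have hx' := Finset.mem_inter.1 hx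
          rw [Finset.mem_inter]
          refine ⟨hx'.1, ?_⟩
          by_contra hxA
          exact hcon x (Finset.mem_sdiff.2 ⟨hx'.2, hxA⟩) hx'.1
        have h1 : r - 1 ≤ (f ∩ A).card :=
          le_trans (hmaxcons f hfH hfE) (Finset.card_le_card hUA)
        have h2 : (f ∩ A).card ≤ r := by
          rw [← hu f hfH]
          exact Finset.card_le_card Finset.inter_subset_left
        have h3 : (f ∩ A).card = r := by omega
        exact hnsub (hsubeq f hfH h3)
    calc cBad ≤ (Eset ∪ (H.filter fun f => ∃ v ∈ U \ A, v ∈ f)).card :=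
          Finset.card_le_card hsub
      _ ≤ Eset.card + (H.filter fun f => ∃ v ∈ U \ A, v ∈ f).card := Finset.card_union_le _ _
      _ ≤ s + (U \ A).card * D₀ := by
          gcongr
          calc (H.filter fun f => ∃ v ∈ U \ A, v ∈ f).card
              ≤ ∑ v ∈ U \ A, (H.filter fun f => v ∈ f).card := by convert count_meet
            _ ≤ (U \ A).card * D₀ := by
                rw [← smul_eq_mul]
                apply Finset.sum_le_card_nsmul
                intro v hv
                have hvA : v ∉ A := (Finset.mem_sdiff.1 hv).2
                rw [hA] at hvA
                simp only [Finset.mem_filter, Finset.mem_univ, true_and, not_lt] at hvA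
                exact hvA
      _ ≤ s + 2*s*D₀ := by
          have : (U \ A).card ≤ 2*s := le_trans (Finset.card_le_card (Finset.sdiff_subset)) hUcard
          have := Nat.mul_le_mul_right D₀ this
          omega
      _ = c₆ := hc₆.symm
  have hInle : cIn ≤ A.card.choose r := inside_le H hu A
  have hCrossle : cCross ≤ A.card.choose (r-1) * (n - A.card) := by
    rw [← hcomplA]
    exact cross_le (by omega) H hu A
  rcases lt_or_eq_of_le hAcard with hAlt | hAs
  · -- Case 1 : |A| < s
    have hIn2 : cIn ≤ s.choose r := le_trans hInle (Nat.choose_le_choose r (by omega))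
    have hCr2 : cCross ≤ q * n := by
      calc cCross ≤ A.card.choose (r-1) * (n - A.card) := hCrossle
        _ ≤ q * n := by
            apply Nat.mul_le_mul
            · exact Nat.choose_le_choose _ (by omega)
            · omega
    have hqP : q + 1 ≤ P := by
      have e1 : s - 1 + 1 = s := by omega
      have e2 : r - 2 + 1 = r - 1 := by omega
      have h : s.choose (r-1) = (s-1).choose (r-2) + (s-1).choose (r-1) := by
        conv_lhs => rw [← e1, ← e2]
        exact (Nat.choose_succ_succ (s-1) (r-2)).trans (by rw [Nat.succ_eq_add_one, e2])
      have hpos : 0 < (s-1).choose (r-2) := Nat.choose_pos (by omega)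
      omega
    have hN : s * q + s.choose r + c₆ ≤ n - s := by
      have hx1 : X1 = s * q := hX1
      omega
    have hfin : cIn + cCross + cBad ≤ P * (n - s) := by
      have h1 : q * n = q * (n - s) + q * s := by
        rw [← Nat.mul_add]
        congr 1
        omega
      have h2 : q * (n - s) + (n - s) ≤ P * (n - s) := by
        calc q * (n - s) + (n - s) = (q + 1) * (n - s) := by ring
          _ ≤ P * (n - s) := Nat.mul_le_mul_right _ hqP
      have h3 : q * s + s.choose r + c₆ ≤ n - s := by
        have : q * s = s * q := Nat.mul_comm _ _
        omega
      omega
    omega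
  · -- Case 2 : |A| = s
    set Missing : Finset (Fin n) → Finset (Fin n) :=
      fun B => (Finset.univ \ A).filter (fun v => insert v B ∉ H) with hMissing
    by_cases hcomp : ∀ B ∈ A.powersetCard (r-1), (Missing B).card ≤ K
    · -- subcase: all (r-1)-subsets nearly complete
      have hPC : (A.powersetCard (r-1)).card = P := by
        rw [Finset.card_powersetCard, hAs, hP]
      set Bigbad : Finset (Fin n) := A ∪ (A.powersetCard (r-1)).biUnion Missing with hBigbad
      have hBBcard : Bigbad.card ≤ s + P*K := by
        calc Bigbad.card ≤ A.card + ((A.powersetCard (r-1)).biUnion Missing).card :=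
              Finset.card_union_le _ _
          _ ≤ s + P*K := by
              have h1 : ((A.powersetCard (r-1)).biUnion Missing).card ≤
                  ∑ B ∈ A.powersetCard (r-1), (Missing B).card := Finset.card_biUnion_le
              have h2 : ∑ B ∈ A.powersetCard (r-1), (Missing B).card ≤
                  (A.powersetCard (r-1)).card * K := by
                rw [← smul_eq_mul]
                exact Finset.sum_le_card_nsmul _ _ _ hcomp
              rw [hPC] at h2
              omega
      have hgood : ∀ w : Fin n, w ∉ Bigbad → w ∉ A ∧
          ∀ B ∈ A.powersetCard (r-1), insert w B ∈ H := by
        intro w hw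
        rw [hBigbad, Finset.mem_union] at hw
        push_neg at hw
        refine ⟨hw.1, ?_⟩
        intro B hB
        by_contra hmem'
        exact hw.2 (Finset.mem_biUnion.2 ⟨B, hB, Finset.mem_filter.2
          ⟨Finset.mem_sdiff.2 ⟨Finset.mem_univ w, hw.1⟩, hmem'⟩⟩)
      have hAcoe : Fintype.card {x // x ∈ A} = s := by rw [Fintype.card_coe, hAs]
      set eqA : {x // x ∈ A} ≃ Fin s := Fintype.equivFinOfCardEq hAcoe with heqA
      set upf : Fin s → Fin n := fun i => (eqA.symm i : Fin n) with hupf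
      have hupfinj : Function.Injective upf := fun i j hij =>
        eqA.symm.injective (Subtype.ext hij)
      have hupfA : ∀ i, upf i ∈ A := fun i => (eqA.symm i).2
      set down : Fin n → Fin s := fun v => if h : v ∈ A then eqA ⟨v, h⟩ else ⟨0, hs⟩ with hdown
      have hdu : ∀ v ∈ A, upf (down v) = v := by
        intro v hv
        rw [hdown]
        dsimp only
        rw [dif_pos hv, hupf]
        dsimp only
        rw [Equiv.symm_apply_apply]
      -- (C1) no bad edges
      have hBadzero : cBad = 0 := by
        rw [hcBad, Finset.card_eq_zero]
        by_contra hne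
        obtain ⟨f, hf⟩ := Finset.nonempty_iff_ne_empty.2 hne
        rw [Finset.mem_filter] at hf
        obtain ⟨hfH, hnsub, hcne⟩ := hf
        have hle : (f ∩ A).card ≤ r := by
          rw [← hu f hfH]
          exact Finset.card_le_card Finset.inter_subset_left
        have hne2 : (f ∩ A).card ≠ r := fun h => hnsub (hsubeq f hfH h)
        have hsd : 2 ≤ (f \ A).card := by
          have := Finset.card_inter_add_card_sdiff f A
          rw [hu f hfH] at this
          omega
        obtain ⟨u, hu', v, hv', huv⟩ := Finset.one_lt_card.1 hsd
        have huf : u ∈ f := (Finset.mem_sdiff.1 hu').1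
        have huA : u ∉ A := (Finset.mem_sdiff.1 hu').2
        have hvf : v ∈ f := (Finset.mem_sdiff.1 hv').1
        have hvA : v ∉ A := (Finset.mem_sdiff.1 hv').2
        have hBex : ∀ i : Fin s, ∃ B, B ∈ A.powersetCard (r-1) ∧ upf i ∈ B := by
          intro i
          have hcar : r - 2 ≤ (A.erase (upf i)).card := by
            rw [Finset.card_erase_of_mem (hupfA i), hAs]
            omega
          obtain ⟨C, hC1, hC2⟩ := Finset.exists_subset_card_eq hcar
          refine ⟨insert (upf i) C, ?_, Finset.mem_insert_self _ _⟩
          rw [Finset.mem_powersetCard]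
          constructor
          · apply Finset.insert_subset (hupfA i)
            exact hC1.trans (Finset.erase_subset _ _)
          · rw [Finset.card_insert_of_notMem, hC2]
            · omega
            · intro hmem'
              exact (Finset.notMem_erase _ _) (hC1 hmem')
        choose Bf hBf1 hBf2 using hBex
        set W : Finset (Fin n) := insert u (insert v Bigbad) with hW
        have hWcard : W.card ≤ s + P*K + 2 := by
          have h1 := Finset.card_insert_le v Bigbad
          have h2 := Finset.card_insert_le u (insert v Bigbad)
          rw [hW]
          omega
        have hYle : s ≤ (Finset.univ \ W).card := by
          rw [Finset.card_sdiff_of_subset (Finset.subset_univ _), Finset.card_univ, Fintype.card_fin]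
          have hx2 : X2 = P * K := hX2
          omega
        obtain ⟨Y, hYsub, hYcard⟩ := Finset.exists_subset_card_eq hYle
        have hYcoe : Fintype.card {x // x ∈ Y} = s := by rw [Fintype.card_coe, hYcard]
        set eqY : {x // x ∈ Y} ≃ Fin s := Fintype.equivFinOfCardEq hYcoe with heqY
        set yf : Fin s → Fin n := fun i => (eqY.symm i : Fin n) with hyf
        have hyfinj : Function.Injective yf := fun i j hij =>
          eqY.symm.injective (Subtype.ext hij)
        have hyfY : ∀ i, yf i ∈ Y := fun i => (eqY.symm i).2
        have hyfW : ∀ i, yf i ∉ W := fun i => (Finset.mem_sdiff.1 (hYsub (hyfY i))).2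
        have hyfBB : ∀ i, yf i ∉ Bigbad := by
          intro i hmem'
          exact hyfW i (Finset.mem_insert_of_mem (Finset.mem_insert_of_mem hmem'))
        have hyfA : ∀ i, yf i ∉ A := fun i h => hyfBB i (Finset.mem_union_left _ h)
        have hyfu : ∀ i, yf i ≠ u := fun i h => hyfW i (h ▸ Finset.mem_insert_self _ _)
        have hyfv : ∀ i, yf i ≠ v := fun i h =>
          hyfW i (h ▸ Finset.mem_insert_of_mem (Finset.mem_insert_self _ _))
        set gs : Fin s × Fin 2 → Fin n := fun p => if p.2 = 0 then upf p.1 else yf p.1 with hgs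
        set es : Fin s → Finset (Fin n) := fun i => insert (yf i) (Bf i) with hes
        have hgsinj : Function.Injective gs := by
          rintro ⟨i, a⟩ ⟨j, b⟩ hab
          rw [hgs] at hab
          dsimp only at hab
          by_cases ha : a = 0 <;> by_cases hb : b = 0
          · rw [if_pos ha, if_pos hb] at hab
            exact Prod.ext (hupfinj hab) (ha.trans hb.symm)
          · rw [if_pos ha, if_neg hb] at hab
            exfalso
            apply hyfA j
            rw [← hab]
            exact hupfA i
          · rw [if_neg ha, if_pos hb] at hab
            exfalso
            apply hyfA i
            rw [hab]
            exact hupfA j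
          · rw [if_neg ha, if_neg hb] at hab
            have hab2 : a = b := by
              have ha' : (a : ℕ) ≠ 0 := fun h => ha (Fin.ext h)
              have hb' : (b : ℕ) ≠ 0 := fun h => hb (Fin.ext h)
              have := a.isLt
              have := b.isLt
              apply Fin.ext
              omega
            exact Prod.ext (hyfinj hab) hab2
        have hesinj : Function.Injective es := by
          intro i j hij
          by_contra hne'
          have h1 : yf i ∈ es j := by
            rw [← hij, hes]
            exact Finset.mem_insert_self _ _
          rw [hes] at h1
          dsimp only at h1
          rcases Finset.mem_insert.1 h1 with h | h
          · exact hne' (hyfinj h)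
          · exact hyfA i ((Finset.mem_powersetCard.1 (hBf1 j)).1 h)
        have hesmem : ∀ i, es i ∈ H ∧ gs (i, 0) ∈ es i ∧ gs (i, 1) ∈ es i := by
          intro i
          refine ⟨?_, ?_, ?_⟩
          · exact (hgood (yf i) (hyfBB i)).2 (Bf i) (hBf1 i)
          · rw [hgs, hes]
            dsimp only
            rw [if_pos rfl]
            exact Finset.mem_insert_of_mem (hBf2 i)
          · rw [hgs, hes]
            dsimp only
            rw [if_neg (show ¬ ((1 : Fin 2) = 0) by decide)]
            exact Finset.mem_insert_self _ _
        have hfes : ∀ i, f ≠ es i := by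
          intro i hfi
          have h1 : es i \ A ⊆ {yf i} := by
            intro x hx
            rw [hes] at hx
            dsimp only at hx
            rcases Finset.mem_insert.1 (Finset.mem_sdiff.1 hx).1 with h | h
            · exact h ▸ Finset.mem_singleton_self _
            · exact absurd ((Finset.mem_powersetCard.1 (hBf1 i)).1 h) (Finset.mem_sdiff.1 hx).2
          have h2 : (f \ A).card ≤ 1 := by
            rw [hfi]
            exact le_trans (Finset.card_le_card h1) (by simp)
          omega
        have hgsnu : ∀ p, gs p ≠ u := by
          intro p hp
          rw [hgs] at hp
          dsimp only at hp
          by_cases ha : p.2 = 0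
          · rw [if_pos ha] at hp
            apply huA
            rw [← hp]
            exact hupfA p.1
          · rw [if_neg ha] at hp
            exact hyfu p.1 hp
        have hgsnv : ∀ p, gs p ≠ v := by
          intro p hp
          rw [hgs] at hp
          dsimp only at hp
          by_cases ha : p.2 = 0
          · rw [if_pos ha] at hp
            apply hvA
            rw [← hp]
            exact hupfA p.1
          · rw [if_neg ha] at hp
            exact hyfv p.1 hp
        exact hnot (bmw_succ gs es hgsinj hesinj hesmem f hfH hfes u v huf hvf huv hgsnu hgsnv)
      -- (C2) the inside part is D(F)-free
      have hInM : cIn ≤ M := by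
        set Hin' : Finset (Finset (Fin s)) :=
          (H.filter fun f => f ⊆ A).image (Finset.image down) with hHin'
        have hdowninj : ∀ f : Finset (Fin n), f ⊆ A → Set.InjOn down ↑f := by
          intro f hfA x hx y hy hxy
          have h1 : upf (down x) = upf (down y) := by rw [hxy]
          rw [hdu x (hfA hx), hdu y (hfA hy)] at h1
          exact h1
        have himgup : ∀ f : Finset (Fin n), f ⊆ A → (f.image down).image upf = f := by
          intro f hfA
          rw [Finset.image_image]
          calc f.image (upf ∘ down) = f.image id :=
                Finset.image_congr (fun x hx => hdu x (hfA hx))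
            _ = f := Finset.image_id
        have hHin'unif : IsUniform r Hin' := by
          intro E hE
          rw [hHin', Finset.mem_image] at hE
          obtain ⟨f, hf, rfl⟩ := hE
          rw [Finset.mem_filter] at hf
          rw [Finset.card_image_of_injOn (hdowninj f hf.2)]
          exact hu f hf.1
        have hHin'card : Hin'.card = cIn := by
          rw [hHin', hcIn]
          apply Finset.card_image_of_injOn
          intro f hf f' hf' hff'
          rw [Finset.mem_coe, Finset.mem_filter] at hf hf'
          rw [← himgup f hf.2, ← himgup f' hf'.2, hff']
        have hHin'free : ∀ S, StronglyIndep F S →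
            ¬ ContainsCopy (Finset.univ \ S) (F.filter fun e => Disjoint e S) Hin' := by
          intro S hSind hcopy
          obtain ⟨g₀, hg₀, hmap₀⟩ := hcopy
          have hmle : m ≤ (Finset.univ \ Bigbad).card := by
            rw [Finset.card_sdiff_of_subset (Finset.subset_univ _), Finset.card_univ, Fintype.card_fin]
            have hx2 : X2 = P * K := hX2
            omega
          obtain ⟨Y, hYsub, hYcard⟩ := Finset.exists_subset_card_eq hmle
          have hYcoe : Fintype.card {x // x ∈ Y} = m := by rw [Fintype.card_coe, hYcard]
          set eqY : {x // x ∈ Y} ≃ Fin m := Fintype.equivFinOfCardEq hYcoe with heqY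
          set yf : Fin m → Fin n := fun i => (eqY.symm i : Fin n) with hyf
          have hyfinj : Function.Injective yf := fun i j hij =>
            eqY.symm.injective (Subtype.ext hij)
          have hyfBB : ∀ i, yf i ∉ Bigbad := fun i =>
            (Finset.mem_sdiff.1 (hYsub (eqY.symm i).2)).2
          have hyfA : ∀ i, yf i ∉ A := fun i h => hyfBB i (Finset.mem_union_left _ h)
          set G : Fin m → Fin n := fun x => if x ∈ S then yf x else upf (g₀ x) with hG
          have hGinj : Set.InjOn G ↑(Finset.univ : Finset (Fin m)) := by
            intro x _ y _ hxy
            rw [hG] at hxy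
            dsimp only at hxy
            by_cases hx : x ∈ S <;> by_cases hy : y ∈ S
            · rw [if_pos hx, if_pos hy] at hxy
              exact hyfinj hxy
            · rw [if_pos hx, if_neg hy] at hxy
              exfalso
              apply hyfA x
              rw [hxy]
              exact hupfA _
            · rw [if_neg hx, if_pos hy] at hxy
              exfalso
              apply hyfA y
              rw [← hxy]
              exact hupfA _
            · rw [if_neg hx, if_neg hy] at hxy
              have h3 : g₀ x = g₀ y := hupfinj hxy
              have hm1 : x ∈ (↑(Finset.univ \ S) : Set (Fin m)) :=
                Finset.mem_coe.2 (Finset.mem_sdiff.2 ⟨Finset.mem_univ _, hx⟩)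
              have hm2 : y ∈ (↑(Finset.univ \ S) : Set (Fin m)) :=
                Finset.mem_coe.2 (Finset.mem_sdiff.2 ⟨Finset.mem_univ _, hy⟩)
              exact hg₀ hm1 hm2 h3
          have hGmap : ∀ e ∈ F, e.image G ∈ H := by
            intro e he
            have hcardeS := hSind e he
            rcases Nat.lt_or_ge (e ∩ S).card 1 with h0 | h1
            · have hdis : Disjoint e S := by
                rw [Finset.disjoint_iff_inter_eq_empty]
                exact Finset.card_eq_zero.1 (by omega)
              have hein : e ∈ F.filter fun e => Disjoint e S := Finset.mem_filter.2 ⟨he, hdis⟩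
              have h2 := hmap₀ e hein
              rw [hHin', Finset.mem_image] at h2
              obtain ⟨f, hf, hfe⟩ := h2
              rw [Finset.mem_filter] at hf
              have hGe : e.image G = f := by
                have hstep : e.image G = e.image (fun x => upf (g₀ x)) := by
                  apply Finset.image_congr
                  intro x hx
                  rw [hG]
                  dsimp only
                  rw [if_neg (Finset.disjoint_left.1 hdis hx)]
                have hstep2 : e.image (fun x => upf (g₀ x)) = (e.image g₀).image upf := by
                  rw [Finset.image_image]
                  rfl
                rw [hstep, hstep2, ← hfe, himgup f hf.2]
              rw [hGe]
              exact hf.1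
            · have hone : (e ∩ S).card = 1 := by omega
              obtain ⟨x, hx⟩ := Finset.card_eq_one.1 hone
              have hxe : x ∈ e := (Finset.mem_inter.1 (hx ▸ Finset.mem_singleton_self x)).1
              have hxS : x ∈ S := (Finset.mem_inter.1 (hx ▸ Finset.mem_singleton_self x)).2
              have herase : ∀ z ∈ e.erase x, z ∉ S := by
                intro z hz hzS
                have hz1 := Finset.mem_erase.1 hz
                have hz2 : z ∈ e ∩ S := Finset.mem_inter.2 ⟨hz1.2, hzS⟩
                rw [hx] at hz2
                exact hz1.1 (Finset.mem_singleton.1 hz2)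
              set Be : Finset (Fin n) := (e.erase x).image (fun z => upf (g₀ z)) with hBe
              have hBemem : Be ∈ A.powersetCard (r-1) := by
                rw [Finset.mem_powersetCard]
                constructor
                · intro w hw
                  rw [hBe, Finset.mem_image] at hw
                  obtain ⟨z, hz, rfl⟩ := hw
                  exact hupfA _
                · rw [hBe]
                  rw [Finset.card_image_of_injOn ?_]
                  · rw [Finset.card_erase_of_mem hxe, hFu e he]
                  · intro z1 hz1 z2 hz2 hz12
                    dsimp only at hz12
                    have h3 : g₀ z1 = g₀ z2 := hupfinj hz12
                    have hm1 : z1 ∈ (↑(Finset.univ \ S) : Set (Fin m)) :=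
                      Finset.mem_coe.2 (Finset.mem_sdiff.2
                        ⟨Finset.mem_univ _, herase z1 (Finset.mem_coe.1 hz1)⟩)
                    have hm2 : z2 ∈ (↑(Finset.univ \ S) : Set (Fin m)) :=
                      Finset.mem_coe.2 (Finset.mem_sdiff.2
                        ⟨Finset.mem_univ _, herase z2 (Finset.mem_coe.1 hz2)⟩)
                    exact hg₀ hm1 hm2 h3
              have hins : insert (yf x) Be ∈ H := (hgood (yf x) (hyfBB x)).2 Be hBemem
              have hGe : e.image G = insert (yf x) Be := by
                conv_lhs => rw [← Finset.insert_erase hxe]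
                rw [Finset.image_insert]
                congr 1
                · rw [hG]
                  dsimp only
                  rw [if_pos hxS]
                · rw [hBe]
                  apply Finset.image_congr
                  intro z hz
                  rw [hG]
                  dsimp only
                  rw [if_neg (herase z hz)]
              rw [hGe]
              exact hins
          exact hFfree ⟨G, hGinj, hGmap⟩
        have hfin := hM Hin' hHin'unif hHin'free
        omega
      have hCr3 : cCross ≤ P * (n - s) := by
        rw [hP]
        calc cCross ≤ A.card.choose (r-1) * (n - A.card) := hCrossle
          _ = s.choose (r-1) * (n - s) := by rw [hAs]
      omega
    · -- subcase: some (r-1)-subset with many missing cross edges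
      push_neg at hcomp
      obtain ⟨B₀, hB₀, hB₀miss⟩ := hcomp
      have hcm2 : cCross + (Missing B₀).card ≤ A.card.choose (r-1) * (Finset.univ \ A).card :=
        cross_add_missing (show 1 ≤ r by omega) H hu A B₀ hB₀
      rw [hcomplA, hAs, ← hP] at hcm2
      have hIn2 : cIn ≤ s.choose r := le_trans hInle (Nat.choose_le_choose r (by omega))
      omega

end BergeAux

/-- Theorem: for `1 ≤ s`, `2 ≤ r ≤ s+1` and an `r`-graph `F` with `χ(F) > 2`, or
`χ(F) = 2` and `q(F) = ∞`, for all sufficiently large `n`,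
`ex_r(n, BM_{s+1} ∪ {F}) = ex_r(s, D(F)) + C(s, r-1)(n-s)`,
where `D(F)` consists of the `r`-graphs obtained from `F` by deleting a
(possibly empty) strongly independent set. -/
theorem exr_berge_matching_and_hypergraph
    (s r m : ℕ) (hs : 1 ≤ s) (hr : 2 ≤ r) (hrs : r ≤ s + 1)
    (F : Finset (Finset (Fin m))) (hF : IsUniform r F)
    (hχ : ¬ HasProperColoring 2 F ∨
      ((HasProperColoring 2 F ∧ ¬ HasProperColoring 1 F) ∧ ¬ HasStrongColoring F)) :
    ∃ n₀ : ℕ, ∀ n : ℕ, n₀ ≤ n →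
      exr n r (fun H => ¬ ContainsBerge (matchingHG (s + 1)) H ∧
          ¬ ContainsCopy Finset.univ F H) =
        exr s r (fun H => ∀ S : Finset (Fin m), StronglyIndep F S →
          ¬ ContainsCopy (Finset.univ \ S) (F.filter fun e => Disjoint e S) H) +
          Nat.choose s (r - 1) * (n - s) := by
  classical
  have hNS : ¬ HasStrongColoring F := by
    rcases hχ with h2 | h2
    · rintro ⟨red, hred⟩
      apply h2
      refine ⟨fun v => if v ∈ red then 0 else 1, ?_⟩
      intro e he
      obtain ⟨u, hue'⟩ := Finset.card_eq_one.1 (hred e he)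
      have hue : u ∈ e := (Finset.mem_inter.1 (hue' ▸ Finset.mem_singleton_self u)).1
      have hur : u ∈ red := (Finset.mem_inter.1 (hue' ▸ Finset.mem_singleton_self u)).2
      have hnsub : ¬ e ⊆ red := by
        intro hsub
        have h3 : e ∩ red = e := Finset.inter_eq_left.2 hsub
        have h4 := hF e he
        rw [h3] at hue'
        rw [hue'] at h4
        rw [Finset.card_singleton] at h4
        omega
      obtain ⟨v, hv, hvr⟩ := Finset.not_subset.1 hnsub
      refine ⟨u, hue, v, hv, ?_⟩
      dsimp only
      rw [if_pos hur, if_neg hvr]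
      decide
    · exact h2.2
  have hRfree0 : ∀ S : Finset (Fin m), StronglyIndep F S →
      ¬ ContainsCopy (Finset.univ \ S) (F.filter fun e => Disjoint e S)
        (∅ : Finset (Finset (Fin s))) := by
    intro S hSind hcopy
    obtain ⟨g₀, hg₀, hmap₀⟩ := hcopy
    by_cases hex : ∃ e ∈ F, Disjoint e S
    · obtain ⟨e, he, hdis⟩ := hex
      exact absurd (hmap₀ e (Finset.mem_filter.2 ⟨he, hdis⟩)) (Finset.notMem_empty _)
    · push_neg at hex
      apply hNS
      refine ⟨S, ?_⟩
      intro e he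
      have h1 := hSind e he
      have h2 : (e ∩ S).Nonempty := Finset.not_disjoint_iff_nonempty_inter.1 (hex e he)
      have h3 := Finset.card_pos.2 h2
      omega
  obtain ⟨H₀, hH₀u, hH₀f, hH₀c⟩ := BergeAux.exr_attained (n := s) (r := r)
    (Free := fun H => ∀ S, StronglyIndep F S →
      ¬ ContainsCopy (Finset.univ \ S) (F.filter fun e => Disjoint e S) H)
    ⟨∅, fun e he => absurd he (Finset.notMem_empty _), hRfree0⟩
  refine ⟨s + (s * ((s-1).choose (r-1)) + s.choose r
          + (s + 2*s*((s+1) + (2*(s+1)).choose (r-1))))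
        + s.choose (r-1) * ((s + 2*s*((s+1) + (2*(s+1)).choose (r-1))) + s.choose r)
        + m + s + 2, ?_⟩
  intro n hn
  have hsn : s ≤ n := by omega
  apply BergeAux.exr_eq_of
  · obtain ⟨Hc, h1, h2, h3⟩ := BergeAux.lower_bound s r m n hs hr hsn F hF H₀ hH₀u hH₀f
    exact ⟨Hc, h1, h2, by rw [h3, hH₀c]⟩
  · intro H huH hfree
    exact BergeAux.upper_bound s r m n hs hr hrs F hF _
      (fun H₀' hu' hf' => BergeAux.exr_le H₀' hu' hf') hn H huH hfree.1 hfree.2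
end

section
/- Let s ≥ 1, r, and k be integers with 2 ≤ r ≤ s+1 and k ≥ r+1, and let K_k^{(r)} denote the complete r-graph on k vertices. Then there exists n₀ such that for all n ≥ n₀, ex_r(n, BM_{s+1} ∪ {K_k^{(r)}}) = ex_r(s, {K_{k−1}^{(r)}}) + C(s, r−1)·(n−s). -/
open Finset

lemma mem_matchingHG {t : ℕ} {e : Finset (Fin t × Fin 2)} :
    e ∈ matchingHG t ↔ ∃ i : Fin t, e = {(i, 0), (i, 1)} := by
  simp [matchingHG, eq_comm]

lemma containsBerge_of_system {n t : ℕ} (ht : 0 < t) (H : Finset (Finset (Fin n)))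
    (E : Fin t → Finset (Fin n)) (p : Fin t × Fin 2 → Fin n)
    (hE : ∀ i, E i ∈ H) (hEinj : Function.Injective E) (hp : Function.Injective p)
    (hpe : ∀ i j, p (i, j) ∈ E i) : ContainsBerge (matchingHG t) H := by
  classical
  set idx : Finset (Fin t × Fin 2) → Fin t := fun S =>
    if h : (S.image Prod.fst).Nonempty then (S.image Prod.fst).min' h else ⟨0, ht⟩ with hidx
  have hidx_pair : ∀ i : Fin t, idx ({(i, 0), (i, 1)} : Finset (Fin t × Fin 2)) = i := by
    intro i
    have himg : (({(i, 0), (i, 1)} : Finset (Fin t × Fin 2)).image Prod.fst) = {i} := by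
      rw [image_insert, image_singleton]
      exact insert_eq_self.2 (mem_singleton_self i)
    simp only [hidx, himg, singleton_nonempty, dif_pos, min'_singleton]
  refine ⟨p, fun S => E (idx S), hp, ?_, ?_, ?_⟩
  · intro a ha b hb hab
    obtain ⟨i, rfl⟩ := mem_matchingHG.1 ha
    obtain ⟨j, rfl⟩ := mem_matchingHG.1 hb
    simp only [hidx_pair] at hab
    rw [hEinj hab]
  · intro e he
    obtain ⟨i, rfl⟩ := mem_matchingHG.1 he
    show E (idx _) ∈ H
    rw [hidx_pair]; exact hE i
  · intro e he
    obtain ⟨i, rfl⟩ := mem_matchingHG.1 he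
    show _ ⊆ E (idx _)
    rw [hidx_pair]
    intro x hx
    simp only [image_insert, image_singleton, mem_insert, mem_singleton] at hx
    rcases hx with rfl | rfl
    · exact hpe i 0
    · exact hpe i 1

lemma berge_of_designated {n t : ℕ} (ht : 0 < t) (H : Finset (Finset (Fin n)))
    (v : Fin t → Fin n) (hv : Function.Injective v)
    (hyp : ∀ (i : Fin t) (U : Finset (Fin n)) (ℰ : Finset (Finset (Fin n))),
      Finset.univ.image v ⊆ U → U.card ≤ t + i → ℰ.card ≤ i →
      ∃ e ∈ H, e ∉ ℰ ∧ v i ∈ e ∧ ∃ u ∈ e, u ∉ U) :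
    ContainsBerge (matchingHG t) H := by
  classical
  have key : ∀ m, m ≤ t → ∃ (E : ℕ → Finset (Fin n)) (u : ℕ → Fin n),
      (∀ i < m, E i ∈ H) ∧ (∀ i < m, ∀ j < m, E i = E j → i = j) ∧
      (∀ i, ∀ _ : i < m, ∀ hi : i < t, v ⟨i, hi⟩ ∈ E i) ∧
      (∀ i < m, u i ∈ E i) ∧ (∀ i < m, ∀ j < m, u i = u j → i = j) ∧
      (∀ i < m, u i ∉ Finset.univ.image v) := by
    intro m
    induction m with
    | zero =>
      intro _
      exact ⟨fun _ => ∅, fun _ => v ⟨0, ht⟩, by omega, by omega, by omega, by omega,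
        by omega, by omega⟩
    | succ m ih =>
      intro hm1
      have hm : m < t := hm1
      obtain ⟨E, u, h1, h2, h3, h4, h5, h6⟩ := ih (le_of_lt hm)
      set U : Finset (Fin n) := Finset.univ.image v ∪ (Finset.range m).image u with hU
      set ℰ : Finset (Finset (Fin n)) := (Finset.range m).image E with hℰ
      have hUcard : U.card ≤ t + m := by
        refine le_trans (card_union_le _ _) ?_
        have h1' : (Finset.univ.image v).card ≤ t := le_trans (card_image_le) (by simp)
        have h2' : ((Finset.range m).image u).card ≤ m := le_trans (card_image_le) (by simp)
        omega
      have hℰcard : ℰ.card ≤ m := le_trans (card_image_le) (by simp)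
      obtain ⟨e, he, heE, hve, u', hu'e, hu'U⟩ :=
        hyp ⟨m, hm⟩ U ℰ subset_union_left hUcard hℰcard
      refine ⟨Function.update E m e, Function.update u m u', ?_, ?_, ?_, ?_, ?_, ?_⟩
      · intro i hi
        rcases Nat.lt_succ_iff_lt_or_eq.1 hi with hi | rfl
        · rw [Function.update_of_ne (by omega)]; exact h1 i hi
        · rw [Function.update_self]; exact he
      · intro i hi j hj hij
        rcases Nat.lt_succ_iff_lt_or_eq.1 hi with hi | rfl <;>
          rcases Nat.lt_succ_iff_lt_or_eq.1 hj with hj | hj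
        · rw [Function.update_of_ne (by omega), Function.update_of_ne (by omega)] at hij
          exact h2 i hi j hj hij
        · subst hj
          rw [Function.update_of_ne (by omega), Function.update_self] at hij
          exact absurd (hij ▸ mem_image_of_mem E (mem_range.2 hi)) heE
        · rw [Function.update_self, Function.update_of_ne (by omega)] at hij
          exact absurd (hij ▸ mem_image_of_mem E (mem_range.2 hj)) heE
        · omega
      · intro i hi hit
        rcases Nat.lt_succ_iff_lt_or_eq.1 hi with hi | rfl
        · rw [Function.update_of_ne (by omega)]; exact h3 i hi hit
        · rw [Function.update_self]
          convert hve using 2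
      · intro i hi
        rcases Nat.lt_succ_iff_lt_or_eq.1 hi with hi | rfl
        · rw [Function.update_of_ne (by omega), Function.update_of_ne (by omega)]
          exact h4 i hi
        · rw [Function.update_self, Function.update_self]; exact hu'e
      · intro i hi j hj hij
        rcases Nat.lt_succ_iff_lt_or_eq.1 hi with hi | rfl <;>
          rcases Nat.lt_succ_iff_lt_or_eq.1 hj with hj | hj
        · rw [Function.update_of_ne (by omega), Function.update_of_ne (by omega)] at hij
          exact h5 i hi j hj hij
        · subst hj
          rw [Function.update_of_ne (by omega), Function.update_self] at hij
          exact absurd (hU ▸ mem_union_right _ (hij ▸ mem_image_of_mem u (mem_range.2 hi)))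
            hu'U
        · rw [Function.update_self, Function.update_of_ne (by omega)] at hij
          exact absurd (hU ▸ mem_union_right _ (hij.symm ▸ mem_image_of_mem u (mem_range.2 hj)))
            hu'U
        · omega
      · intro i hi
        rcases Nat.lt_succ_iff_lt_or_eq.1 hi with hi | rfl
        · rw [Function.update_of_ne (by omega)]; exact h6 i hi
        · rw [Function.update_self]
          intro hmem
          exact hu'U (mem_union_left _ hmem)
  obtain ⟨E, u, h1, h2, h3, h4, h5, h6⟩ := key t le_rfl
  have fin2 : ∀ c : Fin 2, c = 0 ∨ c = 1 := by decide
  refine containsBerge_of_system ht H (fun i => E i.val)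
      (fun x => if x.2 = 0 then v x.1 else u x.1.val) (fun i => h1 i.val i.isLt) ?_ ?_ ?_
  · intro i j hij
    exact Fin.ext (h2 i.val i.isLt j.val j.isLt hij)
  · rintro ⟨i, a⟩ ⟨j, b⟩ hab
    rcases fin2 a with rfl | rfl <;> rcases fin2 b with rfl | rfl
    · have hab' : v i = v j := by simpa using hab
      simp [hv hab']
    · have hab' : v i = u j.val := by simpa using hab
      exact absurd (hab' ▸ mem_image_of_mem v (mem_univ i)) (h6 j.val j.isLt)
    · have hab' : u i.val = v j := by simpa using hab
      exact absurd (hab'.symm ▸ mem_image_of_mem v (mem_univ j)) (h6 i.val i.isLt)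
    · have hab' : u i.val = u j.val := by simpa using hab
      have := h5 i.val i.isLt j.val j.isLt hab'
      rw [Prod.mk.injEq]; exact ⟨Fin.ext this, rfl⟩
  · intro i j
    rcases fin2 j with rfl | rfl
    · have := h3 i.val i.isLt i.isLt
      simpa using this
    · simpa using h4 i.val i.isLt

lemma berge_of_free_pairs {n t : ℕ} (ht : 0 < t) (H : Finset (Finset (Fin n)))
    (W : Finset (Fin n))
    (hyp : ∀ (U : Finset (Fin n)) (ℰ : Finset (Finset (Fin n))),
      Disjoint U W → U.card ≤ 2 * t → ℰ.card < t →
      ∃ e ∈ H, e ∉ ℰ ∧ ∃ x y, x ∈ e ∧ y ∈ e ∧ x ≠ y ∧ x ∉ U ∪ W ∧ y ∉ U ∪ W) :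
    ContainsBerge (matchingHG t) H := by
  classical
  obtain ⟨e₀, -, -, x₀, y₀, -⟩ := hyp ∅ ∅ (disjoint_empty_left _) (by simp) (by simpa using ht)
  have key : ∀ m, m ≤ t → ∃ (E : ℕ → Finset (Fin n)) (a b : ℕ → Fin n),
      (∀ i < m, E i ∈ H) ∧ (∀ i < m, ∀ j < m, E i = E j → i = j) ∧
      (∀ i < m, a i ∈ E i ∧ b i ∈ E i) ∧
      (∀ i < m, ∀ j < m, a i ≠ b j) ∧
      (∀ i < m, ∀ j < m, a i = a j → i = j) ∧
      (∀ i < m, ∀ j < m, b i = b j → i = j) ∧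
      (∀ i < m, a i ∉ W ∧ b i ∉ W) := by
    intro m
    induction m with
    | zero =>
      intro _
      exact ⟨fun _ => ∅, fun _ => x₀, fun _ => x₀, by omega, by omega, by omega, by omega,
        by omega, by omega, by omega⟩
    | succ m ih =>
      intro hm1
      have hm : m < t := hm1
      obtain ⟨E, a, b, h1, h2, h3, h4, h5, h6, h7⟩ := ih (le_of_lt hm)
      set U : Finset (Fin n) := (Finset.range m).image a ∪ (Finset.range m).image b with hU
      set ℰ : Finset (Finset (Fin n)) := (Finset.range m).image E with hℰ
      have hdisj : Disjoint U W := by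
        rw [disjoint_left]
        intro z hz
        rcases mem_union.1 hz with hz | hz
        · obtain ⟨i, hi, rfl⟩ := mem_image.1 hz
          exact (h7 i (mem_range.1 hi)).1
        · obtain ⟨i, hi, rfl⟩ := mem_image.1 hz
          exact (h7 i (mem_range.1 hi)).2
      have hUcard : U.card ≤ 2 * t := by
        refine le_trans (card_union_le _ _) ?_
        have h1' := card_image_le (s := Finset.range m) (f := a)
        have h2' := card_image_le (s := Finset.range m) (f := b)
        simp only [card_range] at h1' h2'
        omega
      have hℰcard : ℰ.card < t := lt_of_le_of_lt (le_trans card_image_le (by simp)) hm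
      obtain ⟨e, he, heE, x, y, hxe, hye, hxy, hxU, hyU⟩ := hyp U ℰ hdisj hUcard hℰcard
      have hxU' : x ∉ U := fun h => hxU (mem_union_left _ h)
      have hyU' : y ∉ U := fun h => hyU (mem_union_left _ h)
      have haU : ∀ j < m, a j ∈ U := fun j hj =>
        mem_union_left _ (mem_image_of_mem a (mem_range.2 hj))
      have hbU : ∀ j < m, b j ∈ U := fun j hj =>
        mem_union_right _ (mem_image_of_mem b (mem_range.2 hj))
      refine ⟨Function.update E m e, Function.update a m x, Function.update b m y,
        ?_, ?_, ?_, ?_, ?_, ?_, ?_⟩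
      · intro i hi
        rcases Nat.lt_succ_iff_lt_or_eq.1 hi with hi | rfl
        · rw [Function.update_of_ne (by omega)]; exact h1 i hi
        · rw [Function.update_self]; exact he
      · intro i hi j hj hij
        rcases Nat.lt_succ_iff_lt_or_eq.1 hi with hi | rfl <;>
          rcases Nat.lt_succ_iff_lt_or_eq.1 hj with hj | hj
        · rw [Function.update_of_ne (by omega), Function.update_of_ne (by omega)] at hij
          exact h2 i hi j hj hij
        · subst hj
          rw [Function.update_of_ne (by omega), Function.update_self] at hij
          exact absurd (hij ▸ mem_image_of_mem E (mem_range.2 hi)) heE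
        · rw [Function.update_self, Function.update_of_ne (by omega)] at hij
          exact absurd (hij ▸ mem_image_of_mem E (mem_range.2 hj)) heE
        · omega
      · intro i hi
        rcases Nat.lt_succ_iff_lt_or_eq.1 hi with hi | rfl
        · rw [Function.update_of_ne (by omega), Function.update_of_ne (by omega),
            Function.update_of_ne (by omega)]
          exact h3 i hi
        · rw [Function.update_self, Function.update_self, Function.update_self]
          exact ⟨hxe, hye⟩
      · intro i hi j hj
        rcases Nat.lt_succ_iff_lt_or_eq.1 hi with hi | rfl <;>
          rcases Nat.lt_succ_iff_lt_or_eq.1 hj with hj | hj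
        · rw [Function.update_of_ne (by omega), Function.update_of_ne (by omega)]
          exact h4 i hi j hj
        · subst hj
          rw [Function.update_of_ne (by omega), Function.update_self]
          intro hcon
          exact hyU' (hcon ▸ haU i hi)
        · rw [Function.update_self, Function.update_of_ne (by omega)]
          intro hcon
          exact hxU' (hcon ▸ hbU j hj)
        · subst hj
          rw [Function.update_self, Function.update_self]
          exact hxy
      · intro i hi j hj hij
        rcases Nat.lt_succ_iff_lt_or_eq.1 hi with hi | rfl <;>
          rcases Nat.lt_succ_iff_lt_or_eq.1 hj with hj | hj
        · rw [Function.update_of_ne (by omega), Function.update_of_ne (by omega)] at hij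
          exact h5 i hi j hj hij
        · subst hj
          rw [Function.update_of_ne (by omega), Function.update_self] at hij
          exact absurd (hij ▸ haU i hi) hxU'
        · rw [Function.update_self, Function.update_of_ne (by omega)] at hij
          exact absurd (hij.symm ▸ haU j hj) hxU'
        · omega
      · intro i hi j hj hij
        rcases Nat.lt_succ_iff_lt_or_eq.1 hi with hi | rfl <;>
          rcases Nat.lt_succ_iff_lt_or_eq.1 hj with hj | hj
        · rw [Function.update_of_ne (by omega), Function.update_of_ne (by omega)] at hij
          exact h6 i hi j hj hij
        · subst hj
          rw [Function.update_of_ne (by omega), Function.update_self] at hij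
          exact absurd (hij ▸ hbU i hi) hyU'
        · rw [Function.update_self, Function.update_of_ne (by omega)] at hij
          exact absurd (hij.symm ▸ hbU j hj) hyU'
        · omega
      · intro i hi
        rcases Nat.lt_succ_iff_lt_or_eq.1 hi with hi | rfl
        · rw [Function.update_of_ne (by omega), Function.update_of_ne (by omega)]
          exact h7 i hi
        · rw [Function.update_self, Function.update_self]
          exact ⟨fun h => hxU (mem_union_right _ h), fun h => hyU (mem_union_right _ h)⟩
  obtain ⟨E, a, b, h1, h2, h3, h4, h5, h6, h7⟩ := key t le_rfl
  have fin2 : ∀ c : Fin 2, c = 0 ∨ c = 1 := by decide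
  refine containsBerge_of_system ht H (fun i => E i.val)
      (fun z => if z.2 = 0 then a z.1.val else b z.1.val) (fun i => h1 i.val i.isLt) ?_ ?_ ?_
  · intro i j hij
    exact Fin.ext (h2 i.val i.isLt j.val j.isLt hij)
  · rintro ⟨i, c⟩ ⟨j, d⟩ hab
    rcases fin2 c with rfl | rfl <;> rcases fin2 d with rfl | rfl
    · have hab' : a i.val = a j.val := by simpa using hab
      simp [Fin.ext (h5 i.val i.isLt j.val j.isLt hab')]
    · have hab' : a i.val = b j.val := by simpa using hab
      exact absurd hab' (h4 i.val i.isLt j.val j.isLt)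
    · have hab' : b i.val = a j.val := by simpa using hab
      exact absurd hab'.symm (h4 j.val j.isLt i.val i.isLt)
    · have hab' : b i.val = b j.val := by simpa using hab
      simp [Fin.ext (h6 i.val i.isLt j.val j.isLt hab')]
  · intro i j
    rcases fin2 j with rfl | rfl
    · simpa using (h3 i.val i.isLt).1
    · simpa using (h3 i.val i.isLt).2

def degHG {n : ℕ} (H : Finset (Finset (Fin n))) (v : Fin n) : ℕ :=
  (H.filter (fun e => v ∈ e)).card

lemma count_edges_in {n r : ℕ} {H : Finset (Finset (Fin n))} (hH : IsUniform r H)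
    (v : Fin n) (U : Finset (Fin n)) :
    (H.filter (fun e => v ∈ e ∧ e ⊆ U)).card ≤ U.card.choose (r - 1) := by
  classical
  rw [← card_powersetCard (r - 1) U]
  apply card_le_card_of_injOn (fun e => e.erase v)
  · intro e he
    rw [mem_coe, mem_filter] at he
    rw [mem_coe, mem_powersetCard]
    exact ⟨(erase_subset _ _).trans he.2.2, by rw [card_erase_of_mem he.2.1, hH e he.1]⟩
  · intro e he f hf hef
    rw [mem_coe, mem_filter] at he hf
    simp only at hef
    rw [← insert_erase he.2.1, ← insert_erase hf.2.1, hef]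

lemma count_touch {n : ℕ} (H : Finset (Finset (Fin n))) (U : Finset (Fin n)) :
    (H.filter (fun e => ∃ x ∈ U, x ∈ e)).card ≤ ∑ x ∈ U, degHG H x := by
  classical
  calc (H.filter (fun e => ∃ x ∈ U, x ∈ e)).card
      ≤ (U.biUnion (fun x => H.filter (fun e => x ∈ e))).card := by
        apply card_le_card
        intro e he
        rw [mem_filter] at he
        obtain ⟨x, hxU, hxe⟩ := he.2
        exact mem_biUnion.2 ⟨x, hxU, mem_filter.2 ⟨he.1, hxe⟩⟩
    _ ≤ ∑ x ∈ U, degHG H x := card_biUnion_le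

lemma count_inside {n r : ℕ} {H : Finset (Finset (Fin n))} (hH : IsUniform r H)
    (S : Finset (Fin n)) :
    (H.filter (fun e => e ⊆ S)).card ≤ S.card.choose r := by
  classical
  rw [← card_powersetCard r S]
  apply card_le_card
  intro e he
  rw [mem_filter] at he
  exact mem_powersetCard.2 ⟨he.2, hH e he.1⟩

lemma count_pendant {n : ℕ} {H : Finset (Finset (Fin n))}
    (S : Finset (Fin n)) (T : Fin n → Finset (Finset (Fin n)))
    (hT : ∀ x, x ∉ S → ∀ e ∈ H, e \ S = {x} → e ∩ S ∈ T x) :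
    (H.filter (fun e => (e \ S).card = 1)).card ≤ ∑ x ∈ Finset.univ \ S, (T x).card := by
  classical
  calc (H.filter (fun e => (e \ S).card = 1)).card
      ≤ ((Finset.univ \ S).biUnion (fun x => (T x).image (insert x))).card := by
        apply card_le_card
        intro e he
        rw [mem_filter] at he
        obtain ⟨x, hx⟩ := card_eq_one.1 he.2
        have hxS : x ∉ S := (mem_sdiff.1 (hx ▸ mem_singleton_self x)).2
        have hxe : x ∈ e := (mem_sdiff.1 (hx ▸ mem_singleton_self x)).1
        refine mem_biUnion.2 ⟨x, mem_sdiff.2 ⟨mem_univ x, hxS⟩, mem_image.2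
          ⟨e ∩ S, hT x hxS e he.1 hx, ?_⟩⟩
        rw [insert_eq, union_comm, ← hx]
        ext z; simp only [mem_union, mem_inter, mem_sdiff]; tauto
    _ ≤ ∑ x ∈ Finset.univ \ S, ((T x).image (insert x)).card := card_biUnion_le
    _ ≤ ∑ x ∈ Finset.univ \ S, (T x).card := Finset.sum_le_sum (fun x _ => card_image_le)

lemma exr_le {n r : ℕ} {Free : Finset (Finset (Fin n)) → Prop} {m : ℕ}
    (h : ∀ H, IsUniform r H → Free H → H.card ≤ m) : exr n r Free ≤ m := by
  apply csSup_le'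
  rintro x ⟨H, h1, h2, rfl⟩
  exact h H h1 h2

lemma le_exr {n r : ℕ} {Free : Finset (Finset (Fin n)) → Prop} {H : Finset (Finset (Fin n))}
    (h1 : IsUniform r H) (h2 : Free H) : H.card ≤ exr n r Free := by
  apply le_csSup
  · refine ⟨Fintype.card (Finset (Fin n)), ?_⟩
    rintro x ⟨H', _, _, rfl⟩
    exact Finset.card_le_univ H'
  · exact ⟨H, h1, h2, rfl⟩

lemma exr_spec {n r : ℕ} {Free : Finset (Finset (Fin n)) → Prop}
    (hne : ∃ H, IsUniform r H ∧ Free H) :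
    ∃ H, IsUniform r H ∧ Free H ∧ H.card = exr n r Free := by
  obtain ⟨H, h1, h2⟩ := hne
  have hmem : exr n r Free ∈
      {m | ∃ H : Finset (Finset (Fin n)), IsUniform r H ∧ Free H ∧ H.card = m} := by
    refine Nat.sSup_mem ⟨H.card, H, h1, h2, rfl⟩ ⟨Fintype.card (Finset (Fin n)), ?_⟩
    rintro x ⟨H', _, _, rfl⟩
    exact Finset.card_le_univ H'
  obtain ⟨H', hH1, hH2, hH3⟩ := hmem
  exact ⟨H', hH1, hH2, hH3⟩

/-- If every edge of `H` has at most one vertex outside `S` with `|S| = s`,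
then `H` has no Berge matching of size `s+1`. -/
lemma no_berge_of_shape {n s : ℕ} {H : Finset (Finset (Fin n))} {S : Finset (Fin n)}
    (hS : S.card = s) (hshape : ∀ e ∈ H, (e \ S).card ≤ 1) :
    ¬ ContainsBerge (matchingHG (s + 1)) H := by
  classical
  rintro ⟨g, φ, hg, hφ, hφH, hsub⟩
  have hpairmem : ∀ i : Fin (s+1), ({(i, 0), (i, 1)} : Finset (Fin (s+1) × Fin 2)) ∈
      matchingHG (s+1) := fun i => mem_matchingHG.2 ⟨i, rfl⟩
  have hgpair : ∀ i : Fin (s+1), g (i, 0) ∈ S ∨ g (i, 1) ∈ S := by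
    intro i
    by_contra hcon
    push_neg at hcon
    have h0 : g (i, 0) ∈ φ {(i, 0), (i, 1)} :=
      hsub _ (hpairmem i) (mem_image_of_mem g (by simp))
    have h1 : g (i, 1) ∈ φ {(i, 0), (i, 1)} :=
      hsub _ (hpairmem i) (mem_image_of_mem g (by simp))
    have hne : g (i, 0) ≠ g (i, 1) := fun h => by simpa using hg h
    have h2 : 1 < (φ {(i, 0), (i, 1)} \ S).card :=
      one_lt_card.2 ⟨g (i,0), mem_sdiff.2 ⟨h0, hcon.1⟩, g (i,1), mem_sdiff.2 ⟨h1, hcon.2⟩, hne⟩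
    have := hshape _ (hφH _ (hpairmem i))
    omega
  set h : Fin (s+1) → Fin n := fun i => if g (i, 0) ∈ S then g (i, 0) else g (i, 1) with hh
  have hform : ∀ i, ∃ c : Fin 2, h i = g (i, c) := by
    intro i
    by_cases hc : g (i, 0) ∈ S
    · exact ⟨0, by simp [hh, hc]⟩
    · exact ⟨1, by simp [hh, hc]⟩
  have hhS : ∀ i, h i ∈ S := by
    intro i
    by_cases hc : g (i, 0) ∈ S
    · simpa [hh, hc]
    · rcases hgpair i with hc' | hc'
      · exact absurd hc' hc
      · simpa [hh, hc]
  have hinj : Set.InjOn h ↑(Finset.univ : Finset (Fin (s+1))) := by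
    intro i _ j _ hij
    obtain ⟨c, hci⟩ := hform i
    obtain ⟨d, hdj⟩ := hform j
    have : g (i, c) = g (j, d) := by rw [← hci, ← hdj, hij]
    exact congrArg Prod.fst (hg this)
  have hcard := card_le_card_of_injOn h (fun i _ => hhS i) hinj
  simp [hS] at hcard

/-- The lower-bound construction. -/
lemma lower_bound_construction (s r k n : ℕ) (hs : 1 ≤ s) (hr : 2 ≤ r) (hrs : r ≤ s + 1)
    (hk : r + 1 ≤ k) (hn : s ≤ n)
    (H₀ : Finset (Finset (Fin s))) (hH₀u : IsUniform r H₀)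
    (hH₀f : ¬ ContainsCopy Finset.univ
      ((Finset.univ : Finset (Fin (k - 1))).powersetCard r) H₀) :
    ∃ H : Finset (Finset (Fin n)), IsUniform r H ∧
      (¬ ContainsBerge (matchingHG (s + 1)) H ∧
        ¬ ContainsCopy Finset.univ ((Finset.univ : Finset (Fin k)).powersetCard r) H) ∧
      H.card = H₀.card + Nat.choose s (r - 1) * (n - s) := by
  classical
  set f : Fin s → Fin n := Fin.castLE hn with hf
  have hfinj : Function.Injective f := Fin.castLE_injective hn
  set S : Finset (Fin n) := Finset.univ.image f with hSdef
  have hScard : S.card = s := by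
    rw [hSdef, card_image_of_injective _ hfinj, card_univ, Fintype.card_fin]
  set HS : Finset (Finset (Fin n)) := H₀.image (Finset.image f) with hHS
  set B : Finset (Finset (Fin n)) :=
    (Finset.univ \ S).biUnion (fun x => (S.powersetCard (r-1)).image (insert x)) with hB
  have hHS_sub : ∀ e ∈ HS, e ⊆ S := by
    intro e he
    obtain ⟨e₀, _, rfl⟩ := mem_image.1 he
    exact image_subset_image (subset_univ e₀)
  have hB_shape : ∀ e ∈ B, ∃ x A, x ∉ S ∧ A ⊆ S ∧ A.card = r - 1 ∧ x ∉ A ∧ e = insert x A := by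
    intro e he
    obtain ⟨x, hx, he'⟩ := mem_biUnion.1 he
    obtain ⟨A, hA, rfl⟩ := mem_image.1 he'
    rw [mem_powersetCard] at hA
    have hxS : x ∉ S := (mem_sdiff.1 hx).2
    exact ⟨x, A, hxS, hA.1, hA.2, fun hxA => hxS (hA.1 hxA), rfl⟩
  -- shape of union
  have hshape : ∀ e ∈ HS ∪ B, (e \ S).card ≤ 1 := by
    intro e he
    rcases mem_union.1 he with he | he
    · have : e \ S = ∅ := sdiff_eq_empty_iff_subset.2 (hHS_sub e he)
      simp [this]
    · obtain ⟨x, A, hxS, hAS, hAcard, hxA, rfl⟩ := hB_shape e he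
      have : insert x A \ S = {x} := by
        ext z
        simp only [mem_sdiff, mem_insert, mem_singleton]
        constructor
        · rintro ⟨rfl | hz, hzS⟩
          · rfl
          · exact absurd (hAS hz) hzS
        · rintro rfl
          exact ⟨Or.inl rfl, hxS⟩
      simp [this]
  have huniform : IsUniform r (HS ∪ B) := by
    intro e he
    rcases mem_union.1 he with he | he
    · obtain ⟨e₀, he₀, rfl⟩ := mem_image.1 he
      rw [card_image_of_injective _ hfinj]
      exact hH₀u e₀ he₀
    · obtain ⟨x, A, hxS, hAS, hAcard, hxA, rfl⟩ := hB_shape e he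
      rw [card_insert_of_notMem hxA, hAcard]
      omega
  have hdisj : Disjoint HS B := by
    rw [disjoint_left]
    intro e heHS heB
    obtain ⟨x, A, hxS, hAS, hAcard, hxA, rfl⟩ := hB_shape e heB
    exact hxS (hHS_sub _ heHS (mem_insert_self x A))
  have hcardB : B.card = Nat.choose s (r-1) * (n - s) := by
    rw [hB, card_biUnion]
    · have heach : ∀ x ∈ Finset.univ \ S, ((S.powersetCard (r-1)).image (insert x)).card
          = Nat.choose s (r-1) := by
        intro x hx
        have hxS : x ∉ S := (mem_sdiff.1 hx).2
        rw [card_image_of_injOn, card_powersetCard, hScard]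
        intro A hA A' hA' hAA'
        rw [mem_coe, mem_powersetCard] at hA hA'
        have hxA : x ∉ A := fun h => hxS (hA.1 h)
        have hxA' : x ∉ A' := fun h => hxS (hA'.1 h)
        rw [← erase_insert hxA, ← erase_insert hxA', hAA']
      rw [Finset.sum_congr rfl heach, Finset.sum_const, card_sdiff_of_subset (subset_univ S), hScard,
        card_univ, Fintype.card_fin, smul_eq_mul, mul_comm]
    · intro x hx y hy hxy
      simp only [disjoint_left]
      intro e he he'
      obtain ⟨A, hA, rfl⟩ := mem_image.1 he
      obtain ⟨A', hA', heq⟩ := mem_image.1 he'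
      rw [mem_powersetCard] at hA hA'
      have hxS : x ∉ S := (mem_sdiff.1 hx).2
      have hyS : y ∉ S := (mem_sdiff.1 hy).2
      have : x ∈ insert y A' := heq ▸ mem_insert_self x A
      rcases mem_insert.1 this with h | h
      · exact hxy h
      · exact hxS (hA'.1 h)
  have hcardHS : HS.card = H₀.card := by
    rw [hHS]
    apply card_image_of_injOn
    intro a _ b _ hab
    exact Finset.image_injective hfinj hab
  refine ⟨HS ∪ B, huniform, ⟨no_berge_of_shape hScard hshape, ?_⟩, ?_⟩
  · -- no K_k
    rintro ⟨g, hg, hgH⟩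
    have hginj : Function.Injective g := fun a b hab => hg (by simp) (by simp) hab
    set T : Finset (Fin n) := Finset.univ.image g with hT
    have hTcard : T.card = k := by
      rw [hT, card_image_of_injective _ hginj, card_univ, Fintype.card_fin]
    have hTout : (T \ S).card ≤ 1 := by
      by_contra hcon
      push_neg at hcon
      obtain ⟨x, hx, y, hy, hxy⟩ := one_lt_card.1 hcon
      obtain ⟨i, -, rfl⟩ := mem_image.1 (mem_sdiff.1 hx).1
      obtain ⟨j, -, rfl⟩ := mem_image.1 (mem_sdiff.1 hy).1
      have hij : i ≠ j := fun h => hxy (by rw [h])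
      obtain ⟨Bij, hBij1, -, hBij3⟩ := exists_subsuperset_card_eq (n := r)
        (subset_univ ({i, j} : Finset (Fin k))) (by
          rw [card_insert_of_notMem (by simpa using hij), card_singleton]; omega)
        (by rw [card_univ, Fintype.card_fin]; omega)
      have hmem : Bij.image g ∈ HS ∪ B :=
        hgH _ (mem_powersetCard.2 ⟨subset_univ _, hBij3⟩)
      have h2 : 1 < (Bij.image g \ S).card := by
        apply one_lt_card.2
        refine ⟨g i, mem_sdiff.2 ⟨mem_image_of_mem g (hBij1 (by simp)), (mem_sdiff.1 hx).2⟩,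
          g j, mem_sdiff.2 ⟨mem_image_of_mem g (hBij1 (by simp)), (mem_sdiff.1 hy).2⟩, hxy⟩
      have := hshape _ hmem
      omega
    have hTin : k - 1 ≤ (T ∩ S).card := by
      have := card_sdiff_add_card_inter T S
      omega
    obtain ⟨K, hKsub, hKcard⟩ := exists_subset_card_eq hTin
    have hKS : K ⊆ S := hKsub.trans inter_subset_right
    have hKT : K ⊆ T := hKsub.trans inter_subset_left
    -- every r-subset of K is an edge of HS
    have hKedge : ∀ A, A ⊆ K → A.card = r → A ∈ HS := by
      intro A hAK hAcard
      obtain ⟨BA, hBA1, hBA2⟩ := Finset.subset_image_iff.1 (hAK.trans hKT)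
      have hBAcard : BA.card = r := by
        rw [← hAcard, ← hBA2, card_image_of_injective _ hginj]
      have hmem : A ∈ HS ∪ B := hBA2 ▸ hgH _ (mem_powersetCard.2 ⟨subset_univ _, hBAcard⟩)
      rcases mem_union.1 hmem with h | h
      · exact h
      · obtain ⟨x, A', hxS, -, -, -, heq⟩ := hB_shape _ h
        exact absurd (hKS (hAK (heq ▸ mem_insert_self x A'))) hxS
    -- pull K back to Fin s and build a K_{k-1} copy in H₀
    obtain ⟨K₀, -, hK₀2⟩ := Finset.subset_image_iff.1 (hSdef ▸ hKS)
    have hK₀card : K₀.card = k - 1 := by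
      rw [← hKcard, ← hK₀2, card_image_of_injective _ hfinj]
    apply hH₀f
    refine ⟨fun i => K₀.orderEmbOfFin hK₀card i, fun a _ b _ hab =>
      (K₀.orderEmbOfFin hK₀card).injective hab, ?_⟩
    intro e he
    rw [mem_powersetCard] at he
    set A₀ : Finset (Fin s) := e.image (fun i => K₀.orderEmbOfFin hK₀card i) with hA₀
    have hA₀K₀ : A₀ ⊆ K₀ := by
      intro z hz
      obtain ⟨i, -, rfl⟩ := mem_image.1 hz
      exact orderEmbOfFin_mem K₀ hK₀card i
    have hA₀card : A₀.card = r := by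
      rw [hA₀, card_image_of_injOn (fun a _ b _ hab =>
        (K₀.orderEmbOfFin hK₀card).injective hab), he.2]
    have himgA : A₀.image f ∈ HS := by
      apply hKedge
      · rw [← hK₀2]
        exact image_subset_image hA₀K₀
      · rw [card_image_of_injective _ hfinj, hA₀card]
    obtain ⟨A₁, hA₁, heq⟩ := mem_image.1 himgA
    rwa [Finset.image_injective hfinj heq] at hA₁
  · rw [card_union_of_disjoint hdisj, hcardHS, hcardB]

/-- Degree threshold. -/
def d0 (s r : ℕ) : ℕ := Nat.choose (2*s+2) (r-1) + s + 3

/-- Bound on the number of edges with two vertices outside the high-degree set. -/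
def c2 (s r : ℕ) : ℕ := 2*(s+1)*(d0 s r) + (s+1)

lemma containsBerge_mono {α : Type*} [DecidableEq α] {n : ℕ} {F : Finset (Finset α)}
    {H H' : Finset (Finset (Fin n))} (hsub : H' ⊆ H)
    (h : ContainsBerge F H') : ContainsBerge F H := by
  obtain ⟨g, φ, h1, h2, h3, h4⟩ := h
  exact ⟨g, φ, h1, h2, fun e he => hsub (h3 e he), h4⟩

lemma exists_fresh_edge {n r s : ℕ} {H : Finset (Finset (Fin n))} (hu : IsUniform r H)
    {v : Fin n} (hv : d0 s r ≤ degHG H v) {U : Finset (Fin n)} (hvU : v ∈ U)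
    (hU : U.card ≤ 2*s+2) {ℰ : Finset (Finset (Fin n))} (hℰ : ℰ.card ≤ s+1) :
    ∃ e ∈ H, e ∉ ℰ ∧ v ∈ e ∧ ∃ u ∈ e, u ∉ U := by
  classical
  set Hv := H.filter (fun e => v ∈ e) with hHv
  have hsplit := card_filter_add_card_filter_not (s := Hv) (p := fun e => e ⊆ U)
  have h1 : (Hv.filter (fun e => e ⊆ U)).card ≤ Nat.choose (2*s+2) (r-1) := by
    have : Hv.filter (fun e => e ⊆ U) = H.filter (fun e => v ∈ e ∧ e ⊆ U) := by
      rw [hHv, filter_filter]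
    rw [this]
    exact le_trans (count_edges_in hu v U) (Nat.choose_le_choose _ hU)
  have h2 : ℰ.card < (Hv.filter (fun e => ¬ e ⊆ U)).card := by
    have hdeg : degHG H v = Hv.card := rfl
    have hd0 : d0 s r = Nat.choose (2*s+2) (r-1) + s + 3 := rfl
    omega
  have h3 : ∃ e ∈ Hv.filter (fun e => ¬ e ⊆ U), e ∉ ℰ := by
    by_contra hcon
    push_neg at hcon
    exact absurd (card_le_card hcon) (by omega)
  obtain ⟨e, he, heℰ⟩ := h3
  rw [mem_filter, hHv, mem_filter] at he
  obtain ⟨⟨heH, hve⟩, hnsub⟩ := he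
  obtain ⟨u, hue, huU⟩ := not_subset.1 hnsub
  exact ⟨e, heH, heℰ, hve, u, hue, huU⟩

lemma few_big_vertices {n r s : ℕ} {H : Finset (Finset (Fin n))} (hu : IsUniform r H)
    (hBfree : ¬ ContainsBerge (matchingHG (s+1)) H) :
    (Finset.univ.filter (fun v => d0 s r ≤ degHG H v)).card ≤ s := by
  classical
  by_contra hcon
  push_neg at hcon
  obtain ⟨D', hD'sub, hD'card⟩ := exists_subset_card_eq (n := s+1) (show s+1 ≤ (Finset.univ.filter (fun v => d0 s r ≤ degHG H v)).card by omega)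
  apply hBfree
  apply berge_of_designated (Nat.succ_pos s) H (fun i => D'.orderEmbOfFin hD'card i)
    (fun a b hab => (D'.orderEmbOfFin hD'card).injective hab)
  intro i U ℰ hUsup hUcard hℰcard
  have hvD : D'.orderEmbOfFin hD'card i ∈ D' := orderEmbOfFin_mem _ _ _
  have hvdeg : d0 s r ≤ degHG H (D'.orderEmbOfFin hD'card i) := by
    have := hD'sub hvD
    rw [mem_filter] at this
    exact this.2
  have hvU : D'.orderEmbOfFin hD'card i ∈ U :=
    hUsup (mem_image_of_mem _ (mem_univ i))
  exact exists_fresh_edge hu hvdeg hvU (by have := i.isLt; omega) (by have := i.isLt; omega)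

lemma few_spread_edges {n r s : ℕ} {H : Finset (Finset (Fin n))} (hu : IsUniform r H)
    {D : Finset (Fin n)} (hDdeg : ∀ x, x ∉ D → degHG H x < d0 s r)
    (hBfree : ¬ ContainsBerge (matchingHG (s+1)) H) :
    (H.filter (fun e => 2 ≤ (e \ D).card)).card ≤ c2 s r := by
  classical
  set Hbig := H.filter (fun e => 2 ≤ (e \ D).card) with hHbig
  by_contra hcon
  push_neg at hcon
  apply hBfree
  have hsubH : Hbig ⊆ H := by rw [hHbig]; exact filter_subset _ _
  apply containsBerge_mono hsubH
  apply berge_of_free_pairs (Nat.succ_pos s) Hbig D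
  intro U ℰ hdisj hUcard hℰcard
  set Bad := ℰ ∪ Hbig.filter (fun e : Finset (Fin n) => ∃ x ∈ U, x ∈ e) with hBad
  have hBadcard : Bad.card ≤ c2 s r := by
    have h1 : (Hbig.filter (fun e => ∃ x ∈ U, x ∈ e)).card ≤ 2*(s+1)*(d0 s r) := by
      calc (Hbig.filter (fun e => ∃ x ∈ U, x ∈ e)).card
          ≤ (H.filter (fun e => ∃ x ∈ U, x ∈ e)).card := by
            apply card_le_card
            intro e he
            rw [mem_filter] at he ⊢
            rw [hHbig, mem_filter] at he
            exact ⟨he.1.1, he.2⟩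
        _ ≤ ∑ x ∈ U, degHG H x := count_touch H U
        _ ≤ ∑ _x ∈ U, d0 s r := by
            apply Finset.sum_le_sum
            intro x hxU
            exact le_of_lt (hDdeg x (disjoint_left.1 hdisj hxU))
        _ = U.card * d0 s r := by rw [Finset.sum_const, smul_eq_mul]
        _ ≤ 2*(s+1)*(d0 s r) := Nat.mul_le_mul_right _ hUcard
    calc Bad.card ≤ ℰ.card + (Hbig.filter (fun e => ∃ x ∈ U, x ∈ e)).card := card_union_le _ _
      _ ≤ c2 s r := by have hc2 : c2 s r = 2*(s+1)*(d0 s r) + (s+1) := rfl; omega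
  have h3 : ∃ e ∈ Hbig, e ∉ Bad := by
    by_contra hcon2
    push_neg at hcon2
    exact absurd (card_le_card hcon2) (by omega)
  obtain ⟨e, heHbig, heBad⟩ := h3
  have heℰ : e ∉ ℰ := fun h => heBad (mem_union_left _ h)
  have heU : ¬ ∃ x ∈ U, x ∈ e := fun h => heBad (mem_union_right _ (mem_filter.2 ⟨heHbig, h⟩))
  push_neg at heU
  have hbig : 2 ≤ (e \ D).card := (mem_filter.1 heHbig).2
  obtain ⟨x, hx, y, hy, hxy⟩ := one_lt_card.1 (by omega : 1 < (e \ D).card)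
  rw [mem_sdiff] at hx hy
  refine ⟨e, heHbig, heℰ, x, y, hx.1, hy.1, hxy, ?_, ?_⟩
  · rw [mem_union]
    rintro (h | h)
    · exact heU x h hx.1
    · exact hx.2 h
  · rw [mem_union]
    rintro (h | h)
    · exact heU y h hy.1
    · exact hy.2 h

lemma step_A {n r s : ℕ} {H : Finset (Finset (Fin n))} (hu : IsUniform r H)
    (hBfree : ¬ ContainsBerge (matchingHG (s+1)) H)
    {S : Finset (Fin n)} (hScard : S.card = s)
    (hdeg : ∀ v ∈ S, d0 s r ≤ degHG H v) :
    ∀ e ∈ H, (e \ S).card ≤ 1 := by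
  classical
  by_contra hcon
  push_neg at hcon
  obtain ⟨estar, hestar, hbig⟩ := hcon
  obtain ⟨u, hu', w, hw', huw⟩ := one_lt_card.1 hbig
  rw [mem_sdiff] at hu' hw'
  set v : Fin (s+1) → Fin n := fun i =>
    if h : (i : ℕ) = 0 then u else S.orderEmbOfFin hScard ⟨(i:ℕ)-1, by omega⟩ with hv
  have hvS : ∀ i : Fin (s+1), (i : ℕ) ≠ 0 → v i ∈ S := by
    intro i hi
    rw [hv]
    simp only [dif_neg hi]
    exact orderEmbOfFin_mem _ _ _
  have hv0 : v 0 = u := by rw [hv]; simp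
  have hvinj : Function.Injective v := by
    intro i j hij
    rw [hv] at hij
    simp only at hij
    by_cases hi : (i : ℕ) = 0 <;> by_cases hj : (j : ℕ) = 0
    · exact Fin.ext (hi.trans hj.symm)
    · rw [dif_pos hi, dif_neg hj] at hij
      exact absurd (hij ▸ orderEmbOfFin_mem S hScard _) hu'.2
    · rw [dif_neg hi, dif_pos hj] at hij
      exact absurd (hij ▸ orderEmbOfFin_mem S hScard _) hu'.2
    · rw [dif_neg hi, dif_neg hj] at hij
      have := (S.orderEmbOfFin hScard).injective hij
      have := Fin.mk.injEq _ _ _ _ ▸ this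
      apply Fin.ext
      omega
  have hvins : ∀ i, v i ∈ insert u S := by
    intro i
    by_cases hi : (i : ℕ) = 0
    · rw [hv]; simp only [dif_pos hi]; exact mem_insert_self u S
    · exact mem_insert_of_mem (hvS i hi)
  apply hBfree
  apply berge_of_designated (Nat.succ_pos s) H v hvinj
  intro i U ℰ hUsup hUcard hℰcard
  by_cases hi : (i : ℕ) = 0
  · have hℰ0 : ℰ = ∅ := card_eq_zero.1 (by omega)
    have himgcard : (Finset.univ.image v).card = s + 1 := by
      rw [card_image_of_injective _ hvinj, card_univ, Fintype.card_fin]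
    have hUeq : Finset.univ.image v = U :=
      eq_of_subset_of_card_le hUsup (by omega)
    have hvi : v i = u := by rw [hv]; simp [hi]
    refine ⟨estar, hestar, by simp [hℰ0], hvi ▸ hu'.1, w, hw'.1, ?_⟩
    intro hwU
    rw [← hUeq] at hwU
    obtain ⟨j, -, hj⟩ := mem_image.1 hwU
    have := hj ▸ hvins j
    rcases mem_insert.1 this with h | h
    · exact huw h.symm
    · exact hw'.2 h
  · have hvU : v i ∈ U := hUsup (mem_image_of_mem _ (mem_univ i))
    exact exists_fresh_edge hu (hdeg _ (hvS i hi)) hvU (by have := i.isLt; omega)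
      (by have := i.isLt; omega)

lemma arith_case3 (s c2' Cr a A m : ℕ) (h1 : a + 1 ≤ A)
    (h2 : A*s + c2' + Cr + Cr + s + 1 ≤ m) :
    c2' + Cr + (s+m)*a ≤ A*m := by
  nlinarith [Nat.mul_le_mul_right m h1, Nat.mul_le_mul_right s (show a ≤ A by omega)]

lemma arith_case4a (Cr A m : ℕ) (h1 : 1 ≤ A) (h2 : Cr ≤ m) :
    Cr + m*(A-1) ≤ A*m := by
  obtain ⟨A', rfl⟩ := Nat.exists_eq_add_of_le h1
  simp only [Nat.add_sub_cancel_left]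
  nlinarith

/-- Threshold for `n`. -/
def n0 (s r : ℕ) : ℕ :=
  s + Nat.choose s (r-1) * s + c2 s r + Nat.choose s r + Nat.choose s r + s + 1

lemma upper_bound (s r k n : ℕ) (hs : 1 ≤ s) (hr : 2 ≤ r) (hrs : r ≤ s + 1) (hk : r + 1 ≤ k)
    (hn : n0 s r ≤ n) {H : Finset (Finset (Fin n))} (hu : IsUniform r H)
    (hBfree : ¬ ContainsBerge (matchingHG (s+1)) H)
    (hKfree : ¬ ContainsCopy Finset.univ ((Finset.univ : Finset (Fin k)).powersetCard r) H) :
    H.card ≤ exr s r (fun H₀ => ¬ ContainsCopy Finset.univ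
      ((Finset.univ : Finset (Fin (k-1))).powersetCard r) H₀) + Nat.choose s (r-1) * (n-s) := by
  classical
  have hn0 : n0 s r = s + Nat.choose s (r-1) * s + c2 s r + Nat.choose s r
      + Nat.choose s r + s + 1 := rfl
  obtain ⟨m, rfl⟩ : ∃ m, n = s + m := ⟨n - s, by omega⟩
  rw [Nat.add_sub_cancel_left]
  have hApos : 1 ≤ Nat.choose s (r-1) := Nat.choose_pos (by omega)
  have e1 : Nat.choose s (r-1) = Nat.choose ((s-1)+1) ((r-2)+1) := by congr 1 <;> omega
  rw [Nat.choose_succ_succ] at e1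
  have e2 : (r-2).succ = r-1 := by omega
  rw [e2] at e1
  have hpas : Nat.choose (s-1) (r-1) + 1 ≤ Nat.choose s (r-1) := by
    have hb : 1 ≤ Nat.choose (s-1) (r-2) := Nat.choose_pos (by omega)
    omega
  set D := Finset.univ.filter (fun v => d0 s r ≤ degHG H v) with hD
  have hDcard : D.card ≤ s := few_big_vertices hu hBfree
  have hDdeg : ∀ x, x ∉ D → degHG H x < d0 s r := by
    intro x hx
    by_contra hcon
    push_neg at hcon
    exact hx (mem_filter.2 ⟨mem_univ x, hcon⟩)
  rcases lt_or_eq_of_le hDcard with hDlt | hDeq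
  · -- case |D| < s
    have hsmall : H.card ≤ c2 s r + Nat.choose s r + (s+m) * Nat.choose (s-1) (r-1) := by
      have hsplit := card_filter_add_card_filter_not (s := H)
        (p := fun e => 2 ≤ (e \ D).card)
      have hbig := few_spread_edges hu hDdeg hBfree
      have hsm : (H.filter (fun e => ¬ 2 ≤ (e \ D).card)).card
          ≤ Nat.choose s r + (s+m) * Nat.choose (s-1) (r-1) := by
        have hstep1 : (H.filter (fun e => ¬ 2 ≤ (e \ D).card)).card
            ≤ (H.filter (fun e => e ⊆ D) ∪ H.filter (fun e => (e \ D).card = 1)).card := by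
          apply card_le_card
          intro e he
          rw [mem_filter] at he
          rw [mem_union, mem_filter, mem_filter]
          rcases (by omega : (e \ D).card = 0 ∨ (e \ D).card = 1) with h | h
          · exact Or.inl ⟨he.1, sdiff_eq_empty_iff_subset.1 (card_eq_zero.1 h)⟩
          · exact Or.inr ⟨he.1, h⟩
        have h0 : (H.filter (fun e => e ⊆ D)).card ≤ Nat.choose s r :=
          le_trans (count_inside hu D) (Nat.choose_le_choose r (by omega))
        have h1 : (H.filter (fun e => (e \ D).card = 1)).card
            ≤ (s+m) * Nat.choose (s-1) (r-1) := by
          have hT : ∀ x, x ∉ D → ∀ e ∈ H, e \ D = {x} → e ∩ D ∈ D.powersetCard (r-1) := by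
            intro x hxD e heH hsd
            rw [mem_powersetCard]
            refine ⟨inter_subset_right, ?_⟩
            have hcards := card_sdiff_add_card_inter e D
            have h1' : (e \ D).card = 1 := by rw [hsd]; exact card_singleton x
            have her := hu e heH
            omega
          calc (H.filter (fun e => (e \ D).card = 1)).card
              ≤ ∑ _x ∈ Finset.univ \ D, (D.powersetCard (r-1)).card :=
                count_pendant D (fun _ => D.powersetCard (r-1)) hT
            _ = (Finset.univ \ D).card * (D.powersetCard (r-1)).card := by
                rw [Finset.sum_const, smul_eq_mul]
            _ ≤ (s+m) * Nat.choose (s-1) (r-1) := by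
                apply Nat.mul_le_mul
                · exact le_trans (card_le_univ _) (by simp)
                · rw [card_powersetCard]
                  exact Nat.choose_le_choose _ (by omega)
        have := card_union_le (H.filter (fun e => e ⊆ D))
          (H.filter (fun e => (e \ D).card = 1))
        omega
      omega
    refine le_trans ?_ (Nat.le_add_left _ _)
    refine le_trans hsmall ?_
    exact arith_case3 s (c2 s r) (Nat.choose s r) (Nat.choose (s-1) (r-1))
      (Nat.choose s (r-1)) m hpas (by omega)
  · -- case |D| = s
    have hDeq' : D.card = s := hDeq
    have hdegS : ∀ v ∈ D, d0 s r ≤ degHG H v := fun v hv => (mem_filter.1 hv).2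
    have hshape := step_A hu hBfree hDeq' hdegS
    have hsplitIO := card_filter_add_card_filter_not (s := H) (p := fun e => e ⊆ D)
    have hOone : ∀ e ∈ H, ¬ e ⊆ D → (e \ D).card = 1 := by
      intro e he hns
      have h1 := hshape e he
      have h2 := card_pos.2 (sdiff_nonempty.2 hns)
      omega
    have hOsub : H.filter (fun e => ¬ e ⊆ D) ⊆ H.filter (fun e => (e \ D).card = 1) := by
      intro e he
      rw [mem_filter] at he ⊢
      exact ⟨he.1, hOone e he.1 he.2⟩
    have hmuniv : (Finset.univ \ D).card = m := by
      rw [card_sdiff_of_subset (subset_univ D), card_univ, Fintype.card_fin, hDeq']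
      omega
    have hI : (H.filter (fun e => e ⊆ D)).card ≤ Nat.choose s r :=
      le_trans (count_inside hu D) (by rw [hDeq'])
    by_cases hKex : ∃ K, K ⊆ D ∧ K.card = k-1 ∧ ∀ A, A ⊆ K → A.card = r → A ∈ H
    · -- subcase 4a : a copy of K_{k-1} inside D
      obtain ⟨K, hKD, hKcard, hKall⟩ := hKex
      have hxA : ∀ x, x ∉ D → ∃ A, A ⊆ K ∧ A.card = r-1 ∧ insert x A ∉ H := by
        intro x hxD
        by_contra hcon
        push_neg at hcon
        apply hKfree
        have hxK : x ∉ K := fun h => hxD (hKD h)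
        have hK'card : (insert x K).card = k := by
          rw [card_insert_of_notMem hxK, hKcard]; omega
        refine ⟨fun i => (insert x K).orderEmbOfFin hK'card i,
          fun a _ b _ hab => ((insert x K).orderEmbOfFin hK'card).injective hab, ?_⟩
        intro e he
        rw [mem_powersetCard] at he
        set A' := e.image (fun i => (insert x K).orderEmbOfFin hK'card i) with hA'
        have hA'sub : A' ⊆ insert x K := by
          intro z hz
          obtain ⟨i, -, rfl⟩ := mem_image.1 hz
          exact orderEmbOfFin_mem _ _ _
        have hA'card : A'.card = r := by
          rw [hA', card_image_of_injOn
            (fun a _ b _ hab => ((insert x K).orderEmbOfFin hK'card).injective hab), he.2]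
        by_cases hxA' : x ∈ A'
        · have h1 : A'.erase x ⊆ K := by
            intro z hz
            rcases mem_insert.1 (hA'sub (erase_subset _ _ hz)) with h | h
            · exact absurd h (mem_erase.1 hz).1
            · exact h
          have h2 : (A'.erase x).card = r - 1 := by rw [card_erase_of_mem hxA', hA'card]
          have := hcon _ h1 h2
          rwa [insert_erase hxA'] at this
        · have h1 : A' ⊆ K := by
            intro z hz
            exact (mem_insert.1 (hA'sub hz)).resolve_left (fun h => hxA' (h ▸ hz))
          exact hKall A' h1 hA'card
      have hxA' : ∀ x, ∃ A, x ∉ D → (A ⊆ K ∧ A.card = r-1 ∧ insert x A ∉ H) := by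
        intro x
        by_cases hxD : x ∉ D
        · exact (hxA x hxD).imp (fun A h _ => h)
        · exact ⟨∅, fun h => absurd h hxD⟩
      choose Af hAf using hxA'
      have hO : (H.filter (fun e => (e \ D).card = 1)).card
          ≤ ∑ x ∈ Finset.univ \ D, ((D.powersetCard (r-1)).erase (Af x)).card := by
        apply count_pendant
        intro x hxD e heH hsd
        obtain ⟨hAK, hAcard, hAni⟩ := hAf x hxD
        have hxe : x ∈ e := (mem_sdiff.1 (hsd ▸ mem_singleton_self x)).1
        have hieq : insert x (e ∩ D) = e := by
          ext z
          simp only [mem_insert, mem_inter]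
          constructor
          · rintro (rfl | ⟨hz, -⟩)
            exacts [hxe, hz]
          · intro hz
            by_cases hzD : z ∈ D
            · exact Or.inr ⟨hz, hzD⟩
            · left
              have hz' : z ∈ e \ D := mem_sdiff.2 ⟨hz, hzD⟩
              rw [hsd] at hz'
              exact mem_singleton.1 hz'
        rw [mem_erase]
        constructor
        · intro heq
          exact hAni (by rw [← heq, hieq]; exact heH)
        · rw [mem_powersetCard]
          refine ⟨inter_subset_right, ?_⟩
          have hcards := card_sdiff_add_card_inter e D
          have h1' : (e \ D).card = 1 := by rw [hsd]; exact card_singleton x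
          have her := hu e heH
          omega
      have hsum : ∑ x ∈ Finset.univ \ D, ((D.powersetCard (r-1)).erase (Af x)).card
          ≤ m * (Nat.choose s (r-1) - 1) := by
        calc ∑ x ∈ Finset.univ \ D, ((D.powersetCard (r-1)).erase (Af x)).card
            ≤ ∑ _x ∈ Finset.univ \ D, (Nat.choose s (r-1) - 1) := by
              apply Finset.sum_le_sum
              intro x hx
              have hxD : x ∉ D := (mem_sdiff.1 hx).2
              obtain ⟨hAK, hAcard, -⟩ := hAf x hxD
              have hmem : Af x ∈ D.powersetCard (r-1) :=
                mem_powersetCard.2 ⟨hAK.trans hKD, hAcard⟩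
              rw [card_erase_of_mem hmem, card_powersetCard, hDeq']
          _ = m * (Nat.choose s (r-1) - 1) := by
              rw [Finset.sum_const, smul_eq_mul, hmuniv]
      refine le_trans ?_ (Nat.le_add_left _ _)
      have hOcard := card_le_card hOsub
      have harith := arith_case4a (Nat.choose s r) (Nat.choose s (r-1)) m hApos (by omega)
      omega
    · -- subcase 4b : interior is K_{k-1}-free, transfer to Fin s
      push_neg at hKex
      set f : Fin s → Fin (s+m) := fun i => D.orderEmbOfFin hDeq' i with hf
      have hfinj : Function.Injective f := fun a b hab => (D.orderEmbOfFin hDeq').injective hab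
      have hfD : ∀ i, f i ∈ D := fun i => orderEmbOfFin_mem _ _ _
      have hDimg : D = Finset.univ.image f := by
        symm
        apply eq_of_subset_of_card_le
        · intro z hz
          obtain ⟨i, -, rfl⟩ := mem_image.1 hz
          exact hfD i
        · rw [card_image_of_injective _ hfinj, card_univ, Fintype.card_fin, hDeq']
      set H₀ := Finset.univ.filter (fun e₀ : Finset (Fin s) => e₀.image f ∈ H) with hH₀
      have hH₀u : IsUniform r H₀ := by
        intro e₀ he₀
        rw [hH₀, mem_filter] at he₀
        rw [← card_image_of_injective e₀ hfinj]
        exact hu _ he₀.2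
      have hH₀card : H₀.card = (H.filter (fun e => e ⊆ D)).card := by
        apply card_bij (fun e₀ _ => e₀.image f)
        · intro e₀ he₀
          rw [hH₀, mem_filter] at he₀
          rw [mem_filter]
          refine ⟨he₀.2, ?_⟩
          intro z hz
          obtain ⟨i, -, rfl⟩ := mem_image.1 hz
          exact hfD i
        · intro a _ b _ hab
          exact Finset.image_injective hfinj hab
        · intro e he
          rw [mem_filter] at he
          obtain ⟨e₀, -, he₀⟩ := Finset.subset_image_iff.1 (hDimg ▸ he.2)
          refine ⟨e₀, ?_, he₀⟩
          rw [hH₀, mem_filter]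
          exact ⟨mem_univ _, he₀ ▸ he.1⟩
      have hH₀free : ¬ ContainsCopy Finset.univ
          ((Finset.univ : Finset (Fin (k-1))).powersetCard r) H₀ := by
        rintro ⟨g, hg, hgH⟩
        have hginj : Function.Injective g := fun a b hab => hg (by simp) (by simp) hab
        have hfginj : Function.Injective (fun i => f (g i)) :=
          fun a b hab => hginj (hfinj hab)
        set K := Finset.univ.image (fun i => f (g i)) with hK
        have hKsub : K ⊆ D := by
          intro z hz
          obtain ⟨i, -, rfl⟩ := mem_image.1 hz
          exact hfD _
        have hKcard : K.card = k-1 := by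
          rw [hK, card_image_of_injective _ hfginj, card_univ, Fintype.card_fin]
        obtain ⟨A, hAK, hAcard, hAnH⟩ := hKex K hKsub hKcard
        apply hAnH
        obtain ⟨B, -, hB⟩ := Finset.subset_image_iff.1 (hK ▸ hAK)
        have hBcard : B.card = r := by
          rw [← hAcard, ← hB, card_image_of_injective _ hfginj]
        have hmem := hgH B (mem_powersetCard.2 ⟨subset_univ _, hBcard⟩)
        rw [hH₀, mem_filter] at hmem
        have himg : (B.image g).image f = A := by
          rw [image_image]
          exact hB
        rw [← himg]
        exact hmem.2
      have hIle : (H.filter (fun e => e ⊆ D)).card ≤ exr s r (fun H₀ => ¬ ContainsCopy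
          Finset.univ ((Finset.univ : Finset (Fin (k-1))).powersetCard r) H₀) := by
        rw [← hH₀card]
        exact le_exr hH₀u hH₀free
      have hO : (H.filter (fun e => (e \ D).card = 1)).card
          ≤ m * Nat.choose s (r-1) := by
        have hT : ∀ x, x ∉ D → ∀ e ∈ H, e \ D = {x} → e ∩ D ∈ D.powersetCard (r-1) := by
          intro x hxD e heH hsd
          rw [mem_powersetCard]
          refine ⟨inter_subset_right, ?_⟩
          have hcards := card_sdiff_add_card_inter e D
          have h1' : (e \ D).card = 1 := by rw [hsd]; exact card_singleton x
          have her := hu e heH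
          omega
        calc (H.filter (fun e => (e \ D).card = 1)).card
            ≤ ∑ _x ∈ Finset.univ \ D, (D.powersetCard (r-1)).card :=
              count_pendant D (fun _ => D.powersetCard (r-1)) hT
          _ = m * Nat.choose s (r-1) := by
              rw [Finset.sum_const, smul_eq_mul, hmuniv, card_powersetCard, hDeq']
      have hOcard := card_le_card hOsub
      have hfin : Nat.choose s (r-1) * m = m * Nat.choose s (r-1) := Nat.mul_comm _ _
      omega

/-- Corollary: for `1 ≤ s`, `2 ≤ r ≤ s+1`, `k ≥ r+1` and all sufficiently large `n`,
`ex_r(n, BM_{s+1} ∪ {K_k^{(r)}}) = ex_r(s, {K_{k-1}^{(r)}}) + C(s, r-1)(n-s)`. -/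
theorem exr_berge_matching_and_complete_hypergraph
    (s r k : ℕ) (hs : 1 ≤ s) (hr : 2 ≤ r) (hrs : r ≤ s + 1) (hk : r + 1 ≤ k) :
    ∃ n₀ : ℕ, ∀ n : ℕ, n₀ ≤ n →
      exr n r (fun H => ¬ ContainsBerge (matchingHG (s + 1)) H ∧
          ¬ ContainsCopy Finset.univ
            ((Finset.univ : Finset (Fin k)).powersetCard r) H) =
        exr s r (fun H => ¬ ContainsCopy Finset.univ
            ((Finset.univ : Finset (Fin (k - 1))).powersetCard r) H) +
          Nat.choose s (r - 1) * (n - s) := by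
  refine ⟨n0 s r, fun n hn => ?_⟩
  have hn0 : n0 s r = s + Nat.choose s (r-1) * s + c2 s r + Nat.choose s r
      + Nat.choose s r + s + 1 := rfl
  have hsn : s ≤ n := by omega
  apply le_antisymm
  · apply exr_le
    rintro H hU ⟨hB, hK⟩
    exact upper_bound s r k n hs hr hrs hk hn hU hB hK
  · have hempty : ∃ H₀ : Finset (Finset (Fin s)), IsUniform r H₀ ∧
        ¬ ContainsCopy Finset.univ
          ((Finset.univ : Finset (Fin (k - 1))).powersetCard r) H₀ := by
      refine ⟨∅, fun e he => absurd he (notMem_empty e), ?_⟩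
      rintro ⟨g, hg, hgH⟩
      obtain ⟨B, -, hBcard⟩ := exists_subset_card_eq
        (show r ≤ (Finset.univ : Finset (Fin (k-1))).card by
          rw [card_univ, Fintype.card_fin]; omega)
      exact absurd (hgH B (mem_powersetCard.2 ⟨subset_univ _, hBcard⟩)) (notMem_empty _)
    obtain ⟨H₀, h1, h2, h3⟩ := exr_spec hempty
    obtain ⟨H, hHu, hHfree, hHcard⟩ :=
      lower_bound_construction s r k n hs hr hrs hk hsn H₀ h1 h2
    have hle := le_exr (Free := fun H => ¬ ContainsBerge (matchingHG (s + 1)) H ∧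
        ¬ ContainsCopy Finset.univ
          ((Finset.univ : Finset (Fin k)).powersetCard r) H) hHu hHfree
    rw [hHcard, h3] at hle
    exact hle
end
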